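/- arXiv:2010.00077 — 11 statements merged into one kernel-verified Lean document; each statement's English description precedes it below -/
import Mathlib

section
/- For every integer s ≥ 1, the alternating sum over i from 0 to s of (-1)^i · C_i · binom(i+1, s-i) equals 0, where C_i = binom(2i,i)/(i+1) is the i-th Catalan number. -/
open Polynomial Finset

noncomputable section CatAux

/-- Catalan generating polynomial truncated at degree N. -/
def catP (N : ℕ) : Polynomial ℤ := ∑ i ∈ range (N + 1), C (catalan i : ℤ) * X ^ i

lemma coeff_catP {N d : ℕ} (hd : d ≤ N) : (catP N).coeff d = (catalan d : ℤ) := by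
  unfold catP
  rw [finset_sum_coeff, Finset.sum_eq_single d]
  · simp
  · intro b _ hb
    simp [coeff_C_mul, coeff_X_pow, hb, Ne.symm hb]
  · intro h
    exact absurd (Finset.mem_range.2 (Nat.lt_succ_of_le hd)) h

lemma catP_key (N : ℕ) : (X : Polynomial ℤ) ^ (N + 1) ∣ 1 + X * (catP N) ^ 2 - catP N := by
  rw [X_pow_dvd_iff]
  intro d hd
  have hdN : d ≤ N := Nat.lt_succ_iff.mp hd
  rcases Nat.eq_zero_or_pos d with rfl | hpos
  · simp [coeff_catP (Nat.zero_le N)]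
  · obtain ⟨e, rfl⟩ : ∃ e, d = e + 1 := ⟨d - 1, (Nat.succ_pred_eq_of_pos hpos).symm⟩
    simp only [coeff_sub, coeff_add, coeff_X_mul]
    have h2 : ((catP N) ^ 2).coeff e = (catalan (e + 1) : ℤ) := by
      rw [sq, coeff_mul, catalan_succ', Nat.cast_sum]
      refine Finset.sum_congr rfl (fun p hp => ?_)
      rw [Finset.HasAntidiagonal.mem_antidiagonal] at hp
      have h1 : p.1 ≤ N := le_trans (hp ▸ Nat.le_add_right _ _) (le_trans (Nat.le_succ e) hdN)
      have hb : p.2 ≤ N := le_trans (hp ▸ Nat.le_add_left _ _) (le_trans (Nat.le_succ e) hdN)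
      rw [coeff_catP h1, coeff_catP hb, Nat.cast_mul]
    rw [h2, coeff_catP hdN]
    simp [coeff_one]

/-- y = -(X + X²). -/
def yy : Polynomial ℤ := -(X + X ^ 2)

/-- substituted truncated series S N = ∑ catalan i * yy^i -/
def catS (N : ℕ) : Polynomial ℤ := ∑ i ∈ range (N + 1), C (catalan i : ℤ) * yy ^ i

lemma catS_eq (N : ℕ) : catS N = aeval yy (catP N) := by
  unfold catS catP
  simp [aeval_def, eval₂_finset_sum]

lemma catS_key (N : ℕ) : (X : Polynomial ℤ) ^ (N + 1) ∣ 1 + yy * (catS N) ^ 2 - catS N := by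
  obtain ⟨r, hr⟩ := catP_key N
  have := congrArg (aeval yy : Polynomial ℤ →ₐ[ℤ] Polynomial ℤ) hr
  simp only [map_sub, map_add, map_mul, map_pow, map_one, aeval_X] at this
  rw [← catS_eq] at this
  rw [this]
  refine Dvd.dvd.mul_right ?_ _
  have : yy = X * (-(1 + X)) := by unfold yy; ring
  rw [this, mul_pow]
  exact Dvd.dvd.mul_right dvd_rfl _

/-- Q N = (1+X) * catS N -/
def catQ (N : ℕ) : Polynomial ℤ := (1 + X) * catS N

lemma catQ_key (N : ℕ) : (X : Polynomial ℤ) ^ (N + 1) ∣ 1 + X - X * (catQ N) ^ 2 - catQ N := by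
  obtain ⟨r, hr⟩ := catS_key N
  refine ⟨(1 + X) * r, ?_⟩
  have : 1 + X - X * (catQ N) ^ 2 - catQ N = (1 + X) * (1 + yy * (catS N) ^ 2 - catS N) := by
    unfold catQ yy; ring
  rw [this, hr]; ring

lemma catQ_coeff_rec {N d : ℕ} (hd : d ≤ N) :
    (catQ N).coeff d = (1 + X : Polynomial ℤ).coeff d - (X * (catQ N) ^ 2).coeff d := by
  have h := (X_pow_dvd_iff.mp (catQ_key N)) d (Nat.lt_succ_of_le hd)
  simp only [coeff_sub, coeff_add] at h ⊢
  linarith [h]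

lemma catQ_coeff_zero (N : ℕ) : (catQ N).coeff 0 = 1 := by
  rw [catQ_coeff_rec (Nat.zero_le N)]
  simp

lemma catQ_coeff_eq_zero {N s : ℕ} (hs : 1 ≤ s) (hsN : s ≤ N) : (catQ N).coeff s = 0 := by
  induction s using Nat.strong_induction_on with
  | _ s ih =>
    obtain ⟨e, rfl⟩ : ∃ e, s = e + 1 := ⟨s - 1, (Nat.succ_pred_eq_of_pos hs).symm⟩
    rw [catQ_coeff_rec hsN, coeff_X_mul, sq, coeff_mul]
    have hsum : ∑ p ∈ antidiagonal e, (catQ N).coeff p.1 * (catQ N).coeff p.2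
        = if e = 0 then 1 else 0 := by
      rcases Nat.eq_zero_or_pos e with rfl | he
      · simp [catQ_coeff_zero]
      · rw [if_neg (Nat.pos_iff_ne_zero.mp he)]
        refine Finset.sum_eq_zero fun p hp => ?_
        rw [Finset.HasAntidiagonal.mem_antidiagonal] at hp
        rcases Nat.eq_zero_or_pos p.1 with h1 | h1
        · have h2 : 1 ≤ p.2 := by omega
          rw [ih p.2 (by omega) h2 (by omega), mul_zero]
        · rw [ih p.1 (by omega) h1 (by omega), zero_mul]
    rw [hsum]
    rcases Nat.eq_zero_or_pos e with rfl | he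
    · simp [coeff_one]
    · rw [if_neg (Nat.pos_iff_ne_zero.mp he)]
      simp only [coeff_add, coeff_one, coeff_X]
      have h1 : e + 1 ≠ 0 := by omega
      have h2 : e + 1 ≠ 1 := by omega
      simp only [if_neg h1, if_neg h2]
      omega

lemma catQ_coeff_formula (s : ℕ) :
    (catQ s).coeff s = ∑ i ∈ Finset.range (s + 1),
      (-1 : ℤ) ^ i * (catalan i : ℤ) * (Nat.choose (i + 1) (s - i) : ℤ) := by
  unfold catQ catS
  rw [Finset.mul_sum, finset_sum_coeff]
  refine Finset.sum_congr rfl fun i hi => ?_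
  rw [Finset.mem_range] at hi
  have hi' : i ≤ s := Nat.lt_succ_iff.mp hi
  have hbase : yy = -1 * (X * (1 + X)) := by unfold yy; ring
  have hterm : (1 + X) * (C (catalan i : ℤ) * yy ^ i)
      = C ((-1) ^ i * (catalan i : ℤ)) * (X ^ i * (1 + X) ^ (i + 1)) := by
    rw [hbase, mul_pow, mul_pow, map_mul, map_pow, map_neg, map_one]
    ring
  rw [hterm, coeff_C_mul, coeff_X_pow_mul', if_pos hi', coeff_one_add_X_pow]

end CatAux

theorem catalan_alternating_sum (s : ℕ) (hs : 1 ≤ s) :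
    ∑ i ∈ Finset.range (s + 1),
      (-1 : ℤ) ^ i * (catalan i : ℤ) * (Nat.choose (i + 1) (s - i) : ℤ) = 0 := by
  rw [← catQ_coeff_formula]
  exact catQ_coeff_eq_zero hs le_rfl
end

section
/- For any non-negative integers m, n and s, binom(n,m) = sum_{j=0}^{s} (-1)^j C_j · binom(n+j+1, m-j) − sum_{j=s+1}^{2s+1} ( sum_{i=0}^{s} (-1)^i C_i · binom(i+1, j-i) ) · binom(n, m-j), where C_j denotes the j-th Catalan number. -/
open Finset

/-- Binomial coefficient `binom a b` with integer lower index `b`, vanishing for `b < 0`. -/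
def ichoose (a : ℕ) (b : ℤ) : ℕ := if 0 ≤ b then a.choose b.toNat else 0

lemma ichoose_ofNat (a k : ℕ) : ichoose a (k : ℤ) = a.choose k := by
  simp [ichoose]

lemma ichoose_neg (a : ℕ) {b : ℤ} (hb : b < 0) : ichoose a b = 0 := by
  simp [ichoose, not_le.2 hb]

lemma ichoose_zero_of_lt (a : ℕ) {b : ℤ} (hb : (a : ℤ) < b) : ichoose a b = 0 := by
  rw [ichoose, if_pos (le_of_lt ((Int.natCast_nonneg a).trans_lt hb))]
  exact Nat.choose_eq_zero_of_lt (by omega)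

/-- canonical Vandermonde convolution for ichoose, flexible summation range -/
lemma ichoose_conv (u v w T : ℕ) (hT : u ≤ T ∨ w ≤ T) :
    ∑ a ∈ range (T + 1), (ichoose u (a : ℤ) * ichoose v ((w : ℤ) - a) : ℤ)
      = ((u + v).choose w : ℤ) := by
  set M := min u w with hM
  have key : ∀ T', M ≤ T' →
      ∑ a ∈ range (T' + 1), (ichoose u (a : ℤ) * ichoose v ((w : ℤ) - a) : ℤ)
        = ∑ a ∈ range (M + 1), (ichoose u (a : ℤ) * ichoose v ((w : ℤ) - a) : ℤ) := by
    intro T' hT'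
    rw [← Finset.sum_subset (Finset.range_subset_range.2 (by omega) : range (M+1) ⊆ range (T'+1))]
    intro a ha hna
    simp only [mem_range] at ha hna
    have : u < a ∨ w < a := by omega
    rcases this with h | h
    · rw [ichoose_zero_of_lt u (by exact_mod_cast h)]; ring
    · rw [ichoose_neg v (by push_cast; omega)]; ring
  have hMT : M ≤ T := by omega
  rw [key T hMT, ← key w (by omega)]
  have : ∀ a ∈ range (w + 1),
      (ichoose u (a : ℤ) * ichoose v ((w : ℤ) - a) : ℤ) = (u.choose a * v.choose (w - a) : ℕ) := by
    intro a ha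
    simp only [mem_range] at ha
    have h1 : (w : ℤ) - a = ((w - a : ℕ) : ℤ) := by push_cast; omega
    rw [h1, ichoose_ofNat, ichoose_ofNat]; push_cast; ring
  rw [Finset.sum_congr rfl this, ← Nat.cast_sum]
  norm_cast
  rw [Nat.add_choose_eq, Finset.Nat.sum_antidiagonal_eq_sum_range_succ_mk]

lemma ichoose_conv_shift (u v i T : ℕ) (Z : ℤ) (hT : (u : ℤ) + i ≤ T ∨ Z + i ≤ T) :
    ∑ a ∈ range (T + 1), (ichoose u ((a : ℤ) - i) * ichoose v (Z - ((a : ℤ) - i)) : ℤ)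
      = (ichoose (u + v) Z : ℤ) := by
  rcases lt_or_ge Z 0 with hZ | hZ
  · rw [ichoose_neg _ hZ]
    refine Finset.sum_eq_zero fun a _ => ?_
    rcases lt_or_ge (a : ℤ) (i : ℤ) with h | h
    · rw [ichoose_neg u (by omega)]; ring
    · rw [ichoose_neg v (by omega)]; ring
  obtain ⟨w, rfl⟩ := Int.eq_ofNat_of_zero_le hZ
  have hiT : i ≤ T := by omega
  rw [← Finset.sum_range_add_sum_Ico _ (show i ≤ T + 1 by omega)]
  have h1 : ∑ a ∈ range i, (ichoose u ((a : ℤ) - i) * ichoose v ((w : ℤ) - ((a : ℤ) - i)) : ℤ) = 0 := by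
    refine Finset.sum_eq_zero fun a ha => ?_
    simp only [mem_range] at ha
    rw [ichoose_neg u (by omega)]; ring
  rw [h1, zero_add, Finset.sum_Ico_eq_sum_range]
  have h2 : T + 1 - i = (T - i) + 1 := by omega
  rw [h2]
  have h3 : ∀ a ∈ range (T - i + 1),
      (ichoose u (((i + a : ℕ) : ℤ) - i) * ichoose v ((w : ℤ) - (((i + a : ℕ) : ℤ) - i)) : ℤ)
        = (ichoose u (a : ℤ) * ichoose v ((w : ℤ) - a) : ℤ) := by
    intro a _
    have : ((i + a : ℕ) : ℤ) - i = (a : ℤ) := by push_cast; ring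
    rw [this]
  rw [Finset.sum_congr rfl h3, ichoose_conv u v w (T - i) (by omega), ichoose_ofNat]

lemma box_triangle (n : ℕ) (h : ℕ → ℕ → ℤ)
    (hv : ∀ i j, n < i + j → h i j = 0) :
    ∑ i ∈ range (n+1), ∑ j ∈ range (n+1), h i j
      = ∑ k ∈ range (n+1), ∑ i ∈ range (k+1), h i (k - i) := by
  rw [← Finset.sum_product', Finset.sum_sigma']
  rw [← Finset.sum_filter_add_sum_filter_not (range (n+1) ×ˢ range (n+1)) (fun p => p.1 + p.2 ≤ n)]
  have h0 : ∑ p ∈ (range (n+1) ×ˢ range (n+1)).filter (fun p => ¬ p.1 + p.2 ≤ n), h p.1 p.2 = 0 :=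
    Finset.sum_eq_zero fun p hp => hv _ _ (by simp at hp; omega)
  rw [h0, add_zero]
  refine Finset.sum_nbij' (i := fun p => (⟨p.1 + p.2, p.1⟩ : Σ _ : ℕ, ℕ))
    (j := fun q => ((q.2, q.1 - q.2) : ℕ × ℕ)) ?_ ?_ ?_ ?_ ?_
  · rintro ⟨a, b⟩ hp
    simp only [mem_filter, mem_product, mem_range, mem_sigma] at hp ⊢
    omega
  · rintro ⟨k, i⟩ hq
    simp only [mem_filter, mem_product, mem_range, mem_sigma] at hq ⊢
    omega
  · rintro ⟨a, b⟩ hp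
    simp only [mem_filter, mem_product, mem_range] at hp
    simp
  · rintro ⟨k, i⟩ hq
    simp only [mem_sigma, mem_range] at hq
    have : i + (k - i) = k := by omega
    simp [this]
  · rintro ⟨a, b⟩ hp
    simp only [mem_filter, mem_product, mem_range] at hp
    simp

def gcat (t : ℕ) : ℤ :=
  ∑ j ∈ range (t + 1), (-1 : ℤ) ^ j * (catalan j : ℤ) * (ichoose (j + 1) ((t : ℤ) - j) : ℤ)

lemma gcat_pad (t T : ℕ) (h : t ≤ T) :
    gcat t = ∑ j ∈ range (T + 1),
      (-1 : ℤ) ^ j * (catalan j : ℤ) * (ichoose (j + 1) ((t : ℤ) - j) : ℤ) := by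
  rw [gcat]
  refine Finset.sum_subset (Finset.range_subset_range.2 (by omega)) fun j hj hnj => ?_
  simp only [mem_range] at hj hnj
  rw [ichoose_neg _ (by push_cast; omega)]
  ring

lemma gcat_rec (t : ℕ) :
    ∑ a ∈ range (t + 1), gcat a * gcat (t - a)
      = (if t = 0 then 1 else 0) - gcat (t + 1) := by
  have step1 : ∑ a ∈ range (t + 1), gcat a * gcat (t - a)
      = ∑ i ∈ range (t+1), ∑ j ∈ range (t+1),
          (-1:ℤ)^i * catalan i * (-1:ℤ)^j * catalan j * ichoose (i+j+2) ((t:ℤ) - i - j) := by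
    have e1 : ∀ a ∈ range (t+1), gcat a * gcat (t - a)
        = ∑ i ∈ range (t+1), ∑ j ∈ range (t+1),
            ((-1:ℤ)^i * catalan i * ichoose (i+1) ((a:ℤ) - i))
            * ((-1:ℤ)^j * catalan j * ichoose (j+1) (((t - a : ℕ) : ℤ) - j)) := by
      intro a ha
      simp only [mem_range] at ha
      rw [gcat_pad a t (by omega), gcat_pad (t - a) t (by omega), Finset.sum_mul_sum]
    rw [Finset.sum_congr rfl e1, Finset.sum_comm]
    refine Finset.sum_congr rfl fun i hi => ?_
    rw [Finset.sum_comm]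
    refine Finset.sum_congr rfl fun j hj => ?_
    simp only [mem_range] at hi hj
    have e2 : ∀ a ∈ range (t+1),
        ((-1:ℤ)^i * catalan i * ichoose (i+1) ((a:ℤ) - i))
          * ((-1:ℤ)^j * catalan j * ichoose (j+1) (((t - a : ℕ) : ℤ) - j))
        = ((-1:ℤ)^i * catalan i * (-1:ℤ)^j * catalan j) *
            (ichoose (i+1) ((a:ℤ) - i) * ichoose (j+1) (((t:ℤ) - i - j) - ((a:ℤ) - i))) := by
      intro a ha
      simp only [mem_range] at ha
      have : ((t - a : ℕ) : ℤ) - j = ((t:ℤ) - i - j) - ((a:ℤ) - i) := by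
        have : (a:ℤ) ≤ t := by exact_mod_cast Nat.le_of_lt_succ (by exact_mod_cast ha)
        push_cast [Nat.cast_sub (by omega : a ≤ t)]
        ring
      rw [this]; ring
    rw [Finset.sum_congr rfl e2, ← Finset.mul_sum,
      ichoose_conv_shift (i+1) (j+1) i t ((t:ℤ) - i - j) (by right; push_cast; omega)]
    have : i + 1 + (j + 1) = i + j + 2 := by ring
    rw [this]
  rw [step1]
  rw [box_triangle t _ (fun i j hij => by
    rw [ichoose_neg _ (by push_cast; omega)]; push_cast; ring)]
  have step2 : ∀ k ∈ range (t+1), (∑ i ∈ range (k+1),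
      (-1:ℤ)^i * catalan i * (-1:ℤ)^(k-i) * catalan (k-i)
        * ichoose (i+(k-i)+2) ((t:ℤ) - (i:ℤ) - ((k-i : ℕ) : ℤ)))
      = (-1:ℤ)^k * (catalan (k+1) : ℤ) * ichoose (k+2) ((t:ℤ) - k) := by
    intro k hk
    have e3 : ∀ i ∈ range (k+1),
        (-1:ℤ)^i * catalan i * (-1:ℤ)^(k-i) * catalan (k-i)
          * ichoose (i+(k-i)+2) ((t:ℤ) - (i:ℤ) - ((k-i : ℕ) : ℤ))
        = ((-1:ℤ)^k * ichoose (k+2) ((t:ℤ) - k)) * ((catalan i * catalan (k-i) : ℕ) : ℤ) := by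
      intro i hi
      simp only [mem_range] at hi
      have h1 : i + (k - i) = k := by omega
      have h2 : ((t:ℤ) - (i:ℤ) - ((k-i:ℕ):ℤ)) = (t:ℤ) - k := by
        push_cast [Nat.cast_sub (by omega : i ≤ k)]; ring
      have hp : (-1:ℤ)^i * (-1:ℤ)^(k-i) = (-1:ℤ)^k := by rw [← pow_add, h1]
      rw [h2, h1]
      push_cast
      linear_combination ((catalan i : ℤ) * (catalan (k-i) : ℤ)
        * (ichoose (k+2) ((t:ℤ) - k) : ℤ)) * hp
    rw [Finset.sum_congr rfl e3, ← Finset.mul_sum, ← Nat.cast_sum]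
    have : ∑ i ∈ range (k+1), catalan i * catalan (k - i) = catalan (k+1) := by
      rw [catalan_succ k, ← Fin.sum_univ_eq_sum_range]
    rw [this]; ring
  rw [Finset.sum_congr rfl step2]
  -- relate to gcat (t+1)
  have step3 : gcat (t+1) = (if t = 0 then 1 else 0)
      - ∑ k ∈ range (t+1), (-1:ℤ)^k * (catalan (k+1) : ℤ) * ichoose (k+2) ((t:ℤ) - k) := by
    rw [gcat, Finset.sum_range_succ']
    have h1 : ∀ k ∈ range (t+1),
        (-1:ℤ)^(k+1) * (catalan (k+1) : ℤ) * (ichoose ((k+1)+1) (((t+1:ℕ):ℤ) - ((k+1:ℕ):ℤ)) : ℤ)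
        = -((-1:ℤ)^k * (catalan (k+1) : ℤ) * ichoose (k+2) ((t:ℤ) - k)) := by
      intro k hk
      have e1 : ((t+1:ℕ):ℤ) - ((k+1:ℕ):ℤ) = (t:ℤ) - k := by push_cast; ring
      have e2 : k + 1 + 1 = k + 2 := by omega
      rw [e1, e2, pow_succ]
      ring
    rw [Finset.sum_congr rfl h1]
    have h0 : (-1:ℤ)^0 * (catalan 0 : ℤ) * (ichoose (0+1) (((t+1:ℕ):ℤ) - ((0:ℕ):ℤ)) : ℤ)
        = (if t = 0 then 1 else 0) := by
      rcases Nat.eq_zero_or_pos t with rfl | ht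
      · norm_num [ichoose]
      · rw [if_neg (by omega), ichoose_zero_of_lt 1 (by push_cast; omega)]
        norm_num
    rw [h0, Finset.sum_neg_distrib]
    ring
  rw [step3]; ring

lemma gcat_zero : gcat 0 = 1 := by
  norm_num [gcat, ichoose]

lemma gcat_succ_eq_zero (t : ℕ) : gcat (t + 1) = 0 := by
  induction t using Nat.strong_induction_on with
  | _ t ih =>
    have h := gcat_rec t
    rcases Nat.eq_zero_or_pos t with rfl | ht
    · simp [gcat_zero] at h
      linarith
    · have hz : ∑ a ∈ range (t + 1), gcat a * gcat (t - a) = 0 := by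
        refine Finset.sum_eq_zero fun a ha => ?_
        simp only [mem_range] at ha
        rcases Nat.eq_zero_or_pos a with rfl | hA
        · have : gcat t = 0 := by
            obtain ⟨t', rfl⟩ := Nat.exists_eq_succ_of_ne_zero (by omega : t ≠ 0)
            exact ih t' (by omega)
          simp [this]
        · have : gcat a = 0 := by
            obtain ⟨a', rfl⟩ := Nat.exists_eq_succ_of_ne_zero (by omega : a ≠ 0)
            exact ih a' (by omega)
          simp [this]
      rw [hz, if_neg (by omega)] at h
      linarith

theorem choose_expression_via_catalan (m n s : ℕ) :
    (n.choose m : ℤ) =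
      (∑ j ∈ Finset.range (s + 1),
        (-1 : ℤ) ^ j * (catalan j : ℤ) * (ichoose (n + j + 1) ((m : ℤ) - j) : ℤ))
      - ∑ j ∈ Finset.Icc (s + 1) (2 * s + 1),
          (∑ i ∈ Finset.range (s + 1),
            (-1 : ℤ) ^ i * (catalan i : ℤ) * (ichoose (i + 1) ((j : ℤ) - i) : ℤ))
          * (ichoose n ((m : ℤ) - j) : ℤ) := by
  have expand : ∀ j ∈ range (s + 1),
      (-1 : ℤ) ^ j * (catalan j : ℤ) * (ichoose (n + j + 1) ((m : ℤ) - j) : ℤ)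
        = ∑ a ∈ range (2 * s + 2),
            (-1 : ℤ) ^ j * (catalan j : ℤ) * (ichoose (j + 1) ((a : ℤ) - j) : ℤ)
              * (ichoose n ((m : ℤ) - a) : ℤ) := by
    intro j hj
    simp only [mem_range] at hj
    have conv := ichoose_conv_shift (j + 1) n j (2 * s + 1) ((m : ℤ) - j)
      (by left; push_cast; omega)
    have e : ∀ a ∈ range (2 * s + 2),
        (-1 : ℤ) ^ j * (catalan j : ℤ) * (ichoose (j + 1) ((a : ℤ) - j) : ℤ)
          * (ichoose n ((m : ℤ) - a) : ℤ)
        = ((-1 : ℤ) ^ j * (catalan j : ℤ)) *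
            ((ichoose (j + 1) ((a : ℤ) - j) : ℤ)
              * (ichoose n (((m : ℤ) - j) - ((a : ℤ) - j)) : ℤ)) := by
      intro a _
      have : ((m : ℤ) - j) - ((a : ℤ) - j) = (m : ℤ) - a := by ring
      rw [this]; ring
    rw [Finset.sum_congr rfl e, ← Finset.mul_sum, conv]
    have : j + 1 + n = n + j + 1 := by ring
    rw [this]
  rw [Finset.sum_congr rfl expand, Finset.sum_comm]
  have factor : ∀ a ∈ range (2 * s + 2),
      (∑ j ∈ range (s + 1),
        (-1 : ℤ) ^ j * (catalan j : ℤ) * (ichoose (j + 1) ((a : ℤ) - j) : ℤ)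
          * (ichoose n ((m : ℤ) - a) : ℤ))
      = (∑ j ∈ range (s + 1),
        (-1 : ℤ) ^ j * (catalan j : ℤ) * (ichoose (j + 1) ((a : ℤ) - j) : ℤ))
          * (ichoose n ((m : ℤ) - a) : ℤ) := by
    intro a _
    rw [Finset.sum_mul]
  rw [Finset.sum_congr rfl factor]
  rw [← Finset.sum_range_add_sum_Ico _ (show s + 1 ≤ 2 * s + 2 by omega)]
  have hIco : Finset.Ico (s + 1) (2 * s + 2) = Finset.Icc (s + 1) (2 * s + 1) := by
    rw [show 2 * s + 2 = (2 * s + 1) + 1 by omega, Finset.Ico_add_one_right_eq_Icc]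
  rw [hIco, add_sub_cancel_right]
  have inner : ∀ a ∈ range (s + 1),
      (∑ j ∈ range (s + 1),
        (-1 : ℤ) ^ j * (catalan j : ℤ) * (ichoose (j + 1) ((a : ℤ) - j) : ℤ))
          * (ichoose n ((m : ℤ) - a) : ℤ)
      = gcat a * (ichoose n ((m : ℤ) - a) : ℤ) := by
    intro a ha
    simp only [mem_range] at ha
    rw [← gcat_pad a s (by omega)]
  rw [Finset.sum_congr rfl inner]
  rw [Finset.sum_eq_single_of_mem 0 (by simp) (fun a _ hne => by
    obtain ⟨a', rfl⟩ := Nat.exists_eq_succ_of_ne_zero hne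
    rw [gcat_succ_eq_zero, zero_mul])]
  rw [gcat_zero, one_mul]
  norm_num [ichoose]
end

section
/- For every integer ℓ ≥ 1, the sum over all tuples (m_1, ..., m_t) of positive integers (of arbitrary length t ≥ 1) with m_1 + ... + m_t = ℓ of the quantity (-1)^t · binom(ℓ - m_1, m_1 - 1) · binom(ℓ - m_2, m_2) · ... · binom(ℓ - m_t, m_t) equals (-1)^ℓ · C_{ℓ-1}, where C_{ℓ-1} is the (ℓ-1)-st Catalan number. -/
open Finset

/-- Recursively defined coefficients of 1 / (∑ w m x^m) with w 0 = 1. -/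
def Tfun (w : ℕ → ℤ) : ℕ → ℤ
  | 0 => 1
  | (k+1) => -∑ j ∈ (Finset.range (k+1)).attach,
      w (k + 1 - j.1) * Tfun w j.1
  decreasing_by exact Finset.mem_range.mp j.2

lemma Tfun_zero (w : ℕ → ℤ) : Tfun w 0 = 1 := by rw [Tfun]

lemma Tfun_succ (w : ℕ → ℤ) (k : ℕ) :
    Tfun w (k+1) = -∑ j ∈ Finset.range (k+1), w (k + 1 - j) * Tfun w j := by
  rw [Tfun, ← Finset.sum_attach (Finset.range (k+1)) (fun j => w (k+1-j) * Tfun w j)]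

lemma headI_mem (l : List ℕ) (h : l ≠ []) : l.headI ∈ l := by
  cases l with
  | nil => exact absurd rfl h
  | cons a t => simp

lemma headI_cons_tail (l : List ℕ) (h : l ≠ []) : l.headI :: l.tail = l := by
  cases l with
  | nil => exact absurd rfl h
  | cons a t => simp

lemma headI_add_tail_sum (l : List ℕ) (h : l ≠ []) : l.headI + l.tail.sum = l.sum := by
  cases l with
  | nil => exact absurd rfl h
  | cons a t => simp

/-- Peeling the first block of a composition. -/
def compPeel (n : ℕ) : Composition (n+1) ≃ Σ j : Fin (n+1), Composition (n - j) where
  toFun c :=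
    have hne : c.blocks ≠ [] :=
      List.ne_nil_of_length_pos (c.length_pos_of_pos (Nat.succ_pos n))
    have h1 : 0 < c.blocks.headI := c.blocks_pos (headI_mem _ hne)
    have hsum : c.blocks.headI + c.blocks.tail.sum = n + 1 := by
      rw [headI_add_tail_sum _ hne, c.blocks_sum]
    ⟨⟨c.blocks.headI - 1, by omega⟩,
     ⟨c.blocks.tail, fun hi => c.blocks_pos (List.mem_of_mem_tail hi), by
        simp only; omega⟩⟩
  invFun p :=
    ⟨(p.1.1 + 1) :: p.2.blocks,
     by
       intro i hi
       rcases List.mem_cons.mp hi with h | h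
       · omega
       · exact p.2.blocks_pos h,
     by
       have := p.2.blocks_sum
       have := p.1.2
       simp only [List.sum_cons, this]
       omega⟩
  left_inv c := by
    have hne : c.blocks ≠ [] :=
      List.ne_nil_of_length_pos (c.length_pos_of_pos (Nat.succ_pos n))
    have h1 : 0 < c.blocks.headI := c.blocks_pos (headI_mem _ hne)
    apply Composition.ext
    simp only
    rw [Nat.sub_add_cancel h1]
    exact headI_cons_tail _ hne
  right_inv p := by
    rcases p with ⟨⟨j, hj⟩, c⟩
    refine Sigma.ext rfl (heq_of_eq ?_)
    exact Composition.ext rfl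


lemma comp_sum_peel (F : List ℕ → ℤ) (n : ℕ) :
    ∑ c : Composition (n+1), F c.blocks
      = ∑ j ∈ Finset.range (n+1), ∑ c : Composition (n - j), F ((j+1) :: c.blocks) := by
  rw [Fintype.sum_equiv (compPeel n) _
      (fun p => F ((p.1.1+1) :: p.2.blocks)) (fun c => by
      have hne : c.blocks ≠ [] :=
        List.ne_nil_of_length_pos (c.length_pos_of_pos (Nat.succ_pos n))
      have h1 : 0 < c.blocks.headI := c.blocks_pos (headI_mem _ hne)
      show F c.blocks = F ((c.blocks.headI - 1 + 1) :: c.blocks.tail)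
      rw [Nat.sub_add_cancel h1, headI_cons_tail _ hne])]
  rw [← Finset.univ_sigma_univ, Finset.sum_sigma]
  rw [← Fin.sum_univ_eq_sum_range]

instance : Unique (Composition 0) where
  default := ⟨[], by simp, by simp⟩
  uniq c := by
    apply Composition.ext
    have hs := c.blocks_sum
    rcases hb : c.blocks with _ | ⟨a, t⟩
    · rfl
    · exfalso
      have ha : 0 < a := c.blocks_pos (by rw [hb]; simp)
      rw [hb, List.sum_cons] at hs
      omega

/-- The alternating composition sum with weight `w` on every block. -/
def Pcomp (w : ℕ → ℤ) (n : ℕ) : ℤ :=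
  ∑ c : Composition n, (-1 : ℤ) ^ c.length * (c.blocks.map w).prod

lemma Pcomp_zero (w : ℕ → ℤ) : Pcomp w 0 = 1 := by
  rw [Pcomp, Fintype.sum_unique]
  simp [Composition.length]
  rfl

lemma Pcomp_eq_Tfun (w : ℕ → ℤ) : ∀ n, Pcomp w n = Tfun w n := by
  intro n
  induction n using Nat.strong_induction_on with
  | _ n ih =>
    match n with
    | 0 => rw [Pcomp_zero, Tfun_zero]
    | (k+1) =>
      rw [Pcomp, comp_sum_peel (fun l => (-1 : ℤ) ^ l.length * (l.map w).prod) k,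
        Tfun_succ, ← Finset.sum_range_reflect (fun j => w (k + 1 - j) * Tfun w j) (k+1),
        ← Finset.sum_neg_distrib]
      apply Finset.sum_congr rfl
      intro j hj
      rw [Finset.mem_range] at hj
      have h1 : k + 1 - 1 - j = k - j := by omega
      have h2 : k + 1 - (k - j) = j + 1 := by omega
      rw [h1, h2, ← ih (k - j) (by omega), Pcomp, Finset.mul_sum, ← Finset.sum_neg_distrib]
      apply Finset.sum_congr rfl
      intro c _
      simp only [List.length_cons, List.map_cons, List.prod_cons, Composition.length, pow_succ]
      ring

noncomputable def Userie (ℓ : ℕ) : PowerSeries ℤ :=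
  PowerSeries.mk fun m => ((ℓ - m).choose m : ℤ)

noncomputable def Tserie (ℓ : ℕ) : PowerSeries ℤ :=
  PowerSeries.mk (Tfun (fun m => ((ℓ - m).choose m : ℤ)))

lemma conv_reflect (w : ℕ → ℤ) (k : ℕ) :
    ∑ j ∈ Finset.range (k+1), w (j+1) * Tfun w (k - j)
      = ∑ j ∈ Finset.range (k+1), w (k+1-j) * Tfun w j := by
  rw [← Finset.sum_range_reflect (fun j => w (k + 1 - j) * Tfun w j) (k+1)]
  apply Finset.sum_congr rfl
  intro j hj
  rw [Finset.mem_range] at hj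
  have h1 : k + 1 - (k + 1 - 1 - j) = j + 1 := by omega
  have h2 : k + 1 - 1 - j = k - j := by omega
  rw [h1, h2]

lemma U_mul_T (ℓ : ℕ) : Userie ℓ * Tserie ℓ = 1 := by
  ext k
  rw [PowerSeries.coeff_mul, Finset.Nat.sum_antidiagonal_eq_sum_range_succ_mk]
  cases k with
  | zero => simp [Userie, Tserie, Tfun_zero]
  | succ k =>
    rw [Finset.sum_range_succ']
    simp only [Userie, Tserie, PowerSeries.coeff_mk]
    have h0 : ∀ j, (k + 1 - (j+1)) = k - j := fun j => by omega
    simp only [h0, Nat.sub_zero, Nat.choose_zero_right, Nat.cast_one, one_mul]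
    rw [Tfun_succ, PowerSeries.coeff_one]
    have hr := conv_reflect (fun m => ((ℓ - m).choose m : ℤ)) k
    rw [hr]
    simp

lemma U_pascal (ℓ : ℕ) : Userie (ℓ+2) = Userie (ℓ+1) + PowerSeries.X * Userie ℓ := by
  ext m
  rw [map_add]
  cases m with
  | zero => simp [Userie]
  | succ m =>
    rw [PowerSeries.coeff_succ_X_mul]
    simp only [Userie, PowerSeries.coeff_mk]
    rcases le_or_gt m ℓ with h | h
    · have h1 : ℓ + 2 - (m+1) = (ℓ - m) + 1 := by omega
      have h2 : ℓ + 1 - (m+1) = ℓ - m := by omega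
      rw [h1, h2]
      have := Nat.choose_succ_succ (ℓ - m) m
      simp only [Nat.succ_eq_add_one] at this
      omega
    · have h1 : ℓ + 2 - (m+1) = 0 := by omega
      have h2 : ℓ + 1 - (m+1) = 0 := by omega
      have h3 : ℓ - m = 0 := by omega
      rw [h1, h2, h3]
      have c1 : Nat.choose 0 (m+1) = 0 := Nat.choose_eq_zero_of_lt (by omega)
      have c2 : Nat.choose 0 m = 0 := Nat.choose_eq_zero_of_lt (by omega)
      rw [c1, c2]
      simp

noncomputable def Rser (ℓ : ℕ) : PowerSeries ℤ := Userie ℓ * Tserie (ℓ+1)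

lemma R_id (ℓ : ℕ) : Rser (ℓ+1) * (1 + PowerSeries.X * Rser ℓ) = 1 := by
  unfold Rser
  calc Userie (ℓ+1) * Tserie (ℓ+2) * (1 + PowerSeries.X * (Userie ℓ * Tserie (ℓ+1)))
      = (Userie (ℓ+1) + (Userie (ℓ+1) * Tserie (ℓ+1)) * (PowerSeries.X * Userie ℓ))
          * Tserie (ℓ+2) := by ring
    _ = Userie (ℓ+2) * Tserie (ℓ+2) := by rw [U_mul_T (ℓ+1), one_mul, ← U_pascal ℓ]
    _ = 1 := U_mul_T (ℓ+2)

lemma coeffR_zero (ℓ : ℕ) : (PowerSeries.coeff 0) (Rser ℓ) = 1 := by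
  simp [Rser, PowerSeries.coeff_mul, Userie, Tserie, Tfun_zero]

lemma coeff_R (ℓ : ℕ) : ∀ k, k ≤ ℓ →
    (PowerSeries.coeff k) (Rser ℓ) = (-1)^k * (catalan k : ℤ) := by
  induction ℓ with
  | zero =>
    intro k hk
    interval_cases k
    simpa using coeffR_zero 0
  | succ ℓ ihℓ =>
    intro k
    induction k using Nat.strong_induction_on with
    | _ k ihk =>
      intro hk
      match k, ihk with
      | 0, _ => simpa using coeffR_zero (ℓ+1)
      | (k+1), ihk =>
        have h : Rser (ℓ+1) = 1 - PowerSeries.X * (Rser ℓ * Rser (ℓ+1)) := by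
          linear_combination R_id ℓ
        rw [h, map_sub, PowerSeries.coeff_one, PowerSeries.coeff_succ_X_mul,
          PowerSeries.coeff_mul]
        have hcongr : ∀ p ∈ Finset.HasAntidiagonal.antidiagonal k,
            (PowerSeries.coeff p.1) (Rser ℓ) * (PowerSeries.coeff p.2) (Rser (ℓ+1))
              = (-1)^k * ((catalan p.1 * catalan p.2 : ℕ) : ℤ) := by
          intro p hp
          rw [Finset.HasAntidiagonal.mem_antidiagonal] at hp
          rw [ihℓ p.1 (by omega), ihk p.2 (by omega) (by omega)]
          push_cast
          rw [← hp]
          ring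
        rw [Finset.sum_congr rfl hcongr, ← Finset.mul_sum, ← Nat.cast_sum, ← catalan_succ']
        simp [pow_succ]

/-- Lemma: the alternating sum over compositions of `ℓ` equals `(-1)^ℓ C_{ℓ-1}`. -/
theorem composition_sum_eq_catalan (ℓ : ℕ) (hl : 1 ≤ ℓ) :
    ∑ c : Composition ℓ,
      (-1 : ℤ) ^ c.length * ((ℓ - c.blocks.headI).choose (c.blocks.headI - 1) : ℤ)
        * (c.blocks.tail.map (fun m => ((ℓ - m).choose m : ℤ))).prod
      = (-1 : ℤ) ^ ℓ * (catalan (ℓ - 1) : ℤ) := by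
  obtain ⟨n, rfl⟩ : ∃ n, ℓ = n + 1 := ⟨ℓ - 1, by omega⟩
  rw [show (∑ c : Composition (n+1),
      (-1 : ℤ) ^ c.length * (((n+1) - c.blocks.headI).choose (c.blocks.headI - 1) : ℤ)
        * (c.blocks.tail.map (fun m => (((n+1) - m).choose m : ℤ))).prod)
      = ∑ c : Composition (n+1), (fun l => (-1:ℤ)^l.length
        * (((n+1) - l.headI).choose (l.headI - 1) : ℤ)
        * (l.tail.map (fun m => (((n+1) - m).choose m : ℤ))).prod) c.blocks from rfl,
    comp_sum_peel (fun l => (-1:ℤ)^l.length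
        * (((n+1) - l.headI).choose (l.headI - 1) : ℤ)
        * (l.tail.map (fun m => (((n+1) - m).choose m : ℤ))).prod) n]
  have hterm : ∀ j ∈ Finset.range (n+1),
      (∑ c : Composition (n - j), (fun l => (-1:ℤ)^l.length
        * (((n+1) - l.headI).choose (l.headI - 1) : ℤ)
        * (l.tail.map (fun m => (((n+1) - m).choose m : ℤ))).prod) ((j+1) :: c.blocks))
      = -(((n - j).choose j : ℤ)
          * Tfun (fun m => (((n+1) - m).choose m : ℤ)) (n - j)) := by
    intro j hj
    rw [Finset.mem_range] at hj
    rw [← Pcomp_eq_Tfun, Pcomp, Finset.mul_sum, ← Finset.sum_neg_distrib]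
    apply Finset.sum_congr rfl
    intro c _
    simp only [List.length_cons, List.headI_cons, List.tail_cons, List.map_cons]
    have h1 : n + 1 - (j+1) = n - j := by omega
    have h2 : j + 1 - 1 = j := by omega
    rw [h1, h2]
    simp only [Composition.length, pow_succ]
    ring
  rw [Finset.sum_congr rfl hterm, Finset.sum_neg_distrib]
  have hco : (PowerSeries.coeff n) (Rser n)
      = ∑ j ∈ Finset.range (n+1), ((n - j).choose j : ℤ)
          * Tfun (fun m => (((n+1) - m).choose m : ℤ)) (n - j) := by
    rw [Rser, PowerSeries.coeff_mul, Finset.Nat.sum_antidiagonal_eq_sum_range_succ_mk]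
    simp [Userie, Tserie]
  rw [← hco, coeff_R n n le_rfl]
  simp [pow_succ]
end

section
/- For every integer ℓ ≥ 2 and j with 0 ≤ j ≤ ℓ-2, the sum over all tuples (m_1, ..., m_t) with m_1 ≥ 0, m_2, ..., m_t > 0 and m_1 + ... + m_t = ℓ - j - 1 of (-1)^t · binom(ℓ - m_1, m_1) · binom(ℓ - m_2, m_2) · ... · binom(ℓ - m_t, m_t) equals 0. -/
/-- Peel off the first block of a composition of `n+1`. -/
def peel (n : ℕ) : Composition (n + 1) ≃ Σ k : Fin (n + 1), Composition (n - k) where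
  toFun c := by
    have hne : c.blocks ≠ [] := by
      intro h
      have := c.blocks_sum
      rw [h] at this
      simp at this
    have hpos : 0 < c.blocks.head! := c.blocks_pos (List.head!_mem_self hne)
    have hsum : c.blocks.head! + c.blocks.tail.sum = n + 1 := by
      conv_rhs => rw [← c.blocks_sum, ← List.cons_head!_tail hne]
      simp
    refine ⟨⟨c.blocks.head! - 1, by omega⟩, ⟨c.blocks.tail, ?_, ?_⟩⟩
    · intro i hi
      exact c.blocks_pos (List.mem_of_mem_tail hi)
    · simp only
      omega
  invFun p := ⟨((p.1 : ℕ) + 1) :: p.2.blocks, by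
      intro i hi
      rcases List.mem_cons.1 hi with h | h
      · omega
      · exact p.2.blocks_pos h, by
      have := p.2.blocks_sum
      have hk : (p.1 : ℕ) ≤ n := Nat.lt_succ_iff.1 p.1.isLt
      simp only [List.sum_cons, this]
      omega⟩
  left_inv c := by
    have hne : c.blocks ≠ [] := by
      intro h
      have := c.blocks_sum
      rw [h] at this
      simp at this
    have hpos : 0 < c.blocks.head! := c.blocks_pos (List.head!_mem_self hne)
    ext1
    simp only
    rw [Nat.sub_add_cancel hpos, List.cons_head!_tail hne]
  right_inv p := rfl

/-- Auxiliary recursively defined sequence. -/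
def gseq (ℓ : ℕ) : ℕ → ℤ
  | 0 => 1
  | (n + 1) => -∑ k : Fin (n + 1),
      ((ℓ - ((k : ℕ) + 1)).choose ((k : ℕ) + 1) : ℤ) * gseq ℓ (n - (k : ℕ))
  decreasing_by exact Nat.lt_succ_of_le (Nat.sub_le _ _)

lemma sum_comp_eq_gseq (ℓ : ℕ) : ∀ n : ℕ,
    ∑ c : Composition n, (-1 : ℤ) ^ c.length
      * (c.blocks.map (fun m => ((ℓ - m).choose m : ℤ))).prod = gseq ℓ n := by
  intro n
  induction n using Nat.strong_induction_on with
  | _ n ih =>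
    match n with
    | 0 =>
      have h1 : ∀ c : Composition 0,
          (-1 : ℤ) ^ c.length
            * (c.blocks.map (fun m => ((ℓ - m).choose m : ℤ))).prod = 1 := by
        intro c
        have hb : c.blocks = [] := by
          have := c.blocks_sum
          rcases hl : c.blocks with _ | ⟨a, l⟩
          · rfl
          · exfalso
            have ha := c.blocks_pos (by rw [hl]; exact List.mem_cons_self)
            rw [hl] at this
            simp only [List.sum_cons] at this
            omega
        simp [Composition.length, hb]
      rw [Finset.sum_congr rfl (fun c _ => h1 c)]
      have : Fintype.card (Composition 0) = 1 := by
        rw [composition_card]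
        norm_num
      simp [Finset.card_univ, this, gseq]
    | (m + 1) =>
      rw [← Equiv.sum_comp (peel m).symm]
      rw [← Finset.univ_sigma_univ, Finset.sum_sigma]
      have : ∀ k : Fin (m + 1),
          ∑ c : Composition (m - (k : ℕ)),
            (-1 : ℤ) ^ ((peel m).symm ⟨k, c⟩).length
              * (((peel m).symm ⟨k, c⟩).blocks.map
                  (fun x => ((ℓ - x).choose x : ℤ))).prod
          = -((ℓ - ((k : ℕ) + 1)).choose ((k : ℕ) + 1) : ℤ) * gseq ℓ (m - (k : ℕ)) := by
        intro k
        have hb : ∀ c : Composition (m - (k : ℕ)),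
            ((peel m).symm ⟨k, c⟩).blocks = ((k : ℕ) + 1) :: c.blocks := fun _ => rfl
        have hlen : ∀ c : Composition (m - (k : ℕ)),
            ((peel m).symm ⟨k, c⟩).length = c.length + 1 := by
          intro c
          simp [Composition.length, hb c]
        rw [← ih (m - (k : ℕ)) (Nat.lt_succ_of_le (Nat.sub_le _ _))]
        rw [Finset.mul_sum]
        refine Finset.sum_congr rfl fun c _ => ?_
        rw [hb c, hlen c]
        simp only [List.map_cons, List.prod_cons, pow_succ]
        ring
      rw [Finset.sum_congr rfl (fun k _ => this k)]
      rw [gseq]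
      rw [← Finset.sum_neg_distrib]
      refine Finset.sum_congr rfl fun k _ => ?_
      ring

/-- The sum over tuples `(m₁,…,m_t)` with `m₁ ≥ 0`, `m₂,…,m_t > 0` and sum `ℓ - j - 1`
(encoded as a choice of `m₁` together with a composition of the remainder) vanishes. -/
theorem tuple_sum_vanishes (ℓ j : ℕ) (hl : 2 ≤ ℓ) (hj : j ≤ ℓ - 2) :
    ∑ m1 ∈ Finset.range (ℓ - j), ∑ c : Composition (ℓ - j - 1 - m1),
      (-1 : ℤ) ^ (c.length + 1) * ((ℓ - m1).choose m1 : ℤ)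
        * (c.blocks.map (fun m => ((ℓ - m).choose m : ℤ))).prod = 0 := by
  obtain ⟨p, hp⟩ : ∃ p, ℓ - j - 1 = p + 1 := ⟨ℓ - j - 2, by omega⟩
  have hrange : ℓ - j = (p + 1) + 1 := by omega
  have key : ∀ m1 : ℕ, ∑ c : Composition (ℓ - j - 1 - m1),
      (-1 : ℤ) ^ (c.length + 1) * ((ℓ - m1).choose m1 : ℤ)
        * (c.blocks.map (fun m => ((ℓ - m).choose m : ℤ))).prod
      = -((ℓ - m1).choose m1 : ℤ) * gseq ℓ (ℓ - j - 1 - m1) := by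
    intro m1
    rw [← sum_comp_eq_gseq ℓ (ℓ - j - 1 - m1), Finset.mul_sum]
    refine Finset.sum_congr rfl fun c _ => ?_
    rw [pow_succ]
    ring
  rw [Finset.sum_congr rfl (fun m1 _ => key m1)]
  rw [hrange, Finset.sum_range_succ']
  have h0 : ∀ i, ℓ - j - 1 - i = p + 1 - i := by omega
  have hs : ∀ i : ℕ, p + 1 + 1 - 1 - i = p + 1 - i := fun i => by omega
  simp only [hs]
  have hlast : -(((ℓ - 0).choose 0 : ℤ)) * gseq ℓ (p + 1 - 0) = -gseq ℓ (p + 1) := by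
    simp
  rw [hlast]
  have hmain : ∑ i ∈ Finset.range (p + 1),
      -(((ℓ - (i + 1)).choose (i + 1) : ℤ)) * gseq ℓ (p + 1 - (i + 1)) = gseq ℓ (p + 1) := by
    rw [gseq, ← Fin.sum_univ_eq_sum_range]
    rw [← Finset.sum_neg_distrib]
    refine Finset.sum_congr rfl fun k _ => ?_
    have hk : p + 1 - ((k : ℕ) + 1) = p - (k : ℕ) := by omega
    rw [hk]
    ring
  rw [hmain]
  ring
end

section
/- For every integer ℓ ≥ 1 and every indeterminate x, the polynomial identity (-1)^{ℓ-1} · (x-1)^ℓ = sum_{m=0}^{⌊(ℓ-1)/2⌋} binom(ℓ-1-m, m) · x^m (x-1)^{m+1} − sum_{m=1}^{⌊ℓ/2⌋} binom(ℓ-1-m, m-1) · x^m (x-1)^m holds in ℝ[x]. -/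
open Polynomial Finset

private lemma pascal_aux {n m : ℕ} (hn : 2 ≤ n) (hm : 1 ≤ m) :
    (n - m).choose m = (n - 1 - m).choose m + (n - 1 - m).choose (m - 1) := by
  obtain ⟨j, rfl⟩ : ∃ j, m = j + 1 := ⟨m - 1, by omega⟩
  rcases le_or_gt (j + 1) (n - 1) with h | h
  · have h1 : n - (j + 1) = (n - 1 - (j + 1)) + 1 := by omega
    rw [h1, Nat.choose_succ_succ, Nat.add_sub_cancel]
    exact Nat.add_comm _ _
  · have e1 : n - (j + 1) = 0 := by omega
    have e2 : n - 1 - (j + 1) = 0 := by omega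
    have hj : 0 < j := by omega
    rw [e1, e2, Nat.add_sub_cancel,
      Nat.choose_eq_zero_of_lt (Nat.succ_pos j), Nat.choose_eq_zero_of_lt hj]

private lemma Pext (n : ℕ) (hn : 2 ≤ n) :
    (-1 : ℝ[X]) ^ (n - 1) * (X - 1) ^ n =
      (∑ m ∈ Finset.range (n + 1), C ((n - 1 - m).choose m : ℝ) * X ^ m * (X - 1) ^ (m + 1))
      - ∑ m ∈ Finset.Icc 1 (n + 1),
          C ((n - 1 - m).choose (m - 1) : ℝ) * X ^ m * (X - 1) ^ m := by
  induction n, hn using Nat.le_induction with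
  | base =>
    rw [show (2:ℕ) + 1 = 3 from rfl]
    rw [Finset.sum_range_succ, Finset.sum_range_succ, Finset.sum_range_succ,
      Finset.sum_range_zero]
    rw [show Finset.Icc 1 3 = {1, 2, 3} from rfl]
    rw [Finset.sum_insert (by decide), Finset.sum_insert (by decide), Finset.sum_singleton]
    norm_num
    ring
  | succ n hn ih =>
    -- abbreviations
    set a : ℕ → ℝ[X] := fun m => C ((n - 1 - m).choose m : ℝ) * X ^ m * (X - 1) ^ (m + 1) with ha
    set b : ℕ → ℝ[X] := fun m => C ((n - 1 - m).choose (m - 1) : ℝ) * X ^ m * (X - 1) ^ m with hb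
    have hatop : a (n + 1) = 0 := by
      have : n - 1 - (n + 1) = 0 := by omega
      simp [ha, this, Nat.choose_eq_zero_of_lt (show 0 < n + 1 by omega)]
    -- L2 : new B sum equals X * old A sum
    have hB1 : (∑ m ∈ Finset.Icc 1 (n + 1 + 1),
          C ((n + 1 - 1 - m).choose (m - 1) : ℝ) * X ^ m * (X - 1) ^ m)
        = X * ∑ m ∈ Finset.range (n + 1), a m := by
      rw [← Finset.Ico_add_one_right_eq_Icc, Finset.sum_Ico_eq_sum_range, Finset.mul_sum]
      have hr : n + 1 + 1 + 1 - 1 = n + 2 := rfl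
      rw [hr, Finset.sum_range_succ]
      have htop : C ((n + 1 - 1 - (1 + (n + 1))).choose (1 + (n + 1) - 1) : ℝ)
          * X ^ (1 + (n + 1)) * (X - 1) ^ (1 + (n + 1)) = 0 := by
        rw [show n + 1 - 1 - (1 + (n + 1)) = 0 by omega, show 1 + (n + 1) - 1 = n + 1 by omega,
          Nat.choose_eq_zero_of_lt (Nat.succ_pos n)]
        simp
      rw [htop, add_zero]
      apply Finset.sum_congr rfl
      intro i _
      have e : n + 1 - 1 - (1 + i) = n - 1 - i := by omega
      have e2 : 1 + i - 1 = i := by omega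
      rw [e, e2]
      simp only [ha]
      ring
    -- L1 : new A sum = old A sum + (X-1) * old B sum
    have hA1 : (∑ m ∈ Finset.range (n + 1 + 1),
          C ((n + 1 - 1 - m).choose m : ℝ) * X ^ m * (X - 1) ^ (m + 1))
        = (∑ m ∈ Finset.range (n + 1), a m)
          + (X - 1) * ∑ m ∈ Finset.Icc 1 (n + 1), b m := by
      have hAs : (∑ m ∈ Finset.range (n + 1), a m)
          = a 0 + ∑ i ∈ Finset.range (n + 1), a (i + 1) := by
        have h1 : (∑ m ∈ Finset.range (n + 2), a m)
            = (∑ m ∈ Finset.range (n + 1), a m) + a (n + 1) := Finset.sum_range_succ a (n + 1)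
        have h2 : (∑ m ∈ Finset.range (n + 2), a m)
            = (∑ i ∈ Finset.range (n + 1), a (i + 1)) + a 0 := Finset.sum_range_succ' a (n + 1)
        rw [hatop, add_zero] at h1
        rw [← h1, h2]; ring
      rw [hAs, ← Finset.Ico_add_one_right_eq_Icc, Finset.sum_Ico_eq_sum_range, Finset.mul_sum]
      have hr : n + 1 + 1 - 1 = n + 1 := rfl
      rw [hr, Finset.sum_range_succ']
      have h0 : C ((n + 1 - 1 - 0).choose 0 : ℝ) * X ^ 0 * (X - 1) ^ (0 + 1) = a 0 := by
        simp [ha]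
      rw [h0]
      have hsum : (∑ k ∈ Finset.range (n + 1),
            C ((n + 1 - 1 - (k + 1)).choose (k + 1) : ℝ) * X ^ (k + 1) * (X - 1) ^ (k + 1 + 1))
          = (∑ i ∈ Finset.range (n + 1), a (i + 1))
            + ∑ i ∈ Finset.range (n + 1), (X - 1) * b (1 + i) := by
        rw [← Finset.sum_add_distrib]
        apply Finset.sum_congr rfl
        intro i _
        have e : n + 1 - 1 - (i + 1) = n - (i + 1) := by omega
        have ep : (n - (i + 1)).choose (i + 1)
            = (n - 1 - (i + 1)).choose (i + 1) + (n - 1 - (i + 1)).choose (i + 1 - 1) :=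
          pascal_aux hn (by omega)
        have e2 : i + 1 - 1 = i := by omega
        have e3 : (1 + i : ℕ) = i + 1 := by omega
        rw [e, ep, e2, e3]
        simp only [ha, hb, e2]
        push_cast
        rw [map_add]
        ring
      rw [hsum]
      ring
    rw [hA1, hB1, Nat.add_sub_cancel]
    have hpow : (-1 : ℝ[X]) ^ n = (-1) ^ (n - 1) * (-1) := by
      conv_lhs => rw [show n = (n - 1) + 1 by omega]
      rw [pow_succ]
    have hpow2 : (-1 : ℝ[X]) ^ n * (X - 1) ^ (n + 1)
        = -(X - 1) * ((-1) ^ (n - 1) * (X - 1) ^ n) := by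
      rw [hpow]; ring
    rw [hpow2, ih]
    ring

open Polynomial in
theorem power_x_sub_one_expansion (ℓ : ℕ) (hl : 1 ≤ ℓ) :
    (-1 : ℝ[X]) ^ (ℓ - 1) * (X - 1) ^ ℓ =
      (∑ m ∈ Finset.range ((ℓ - 1) / 2 + 1),
        C ((ℓ - 1 - m).choose m : ℝ) * X ^ m * (X - 1) ^ (m + 1))
      - ∑ m ∈ Finset.Icc 1 (ℓ / 2),
          C ((ℓ - 1 - m).choose (m - 1) : ℝ) * X ^ m * (X - 1) ^ m := by
  rcases eq_or_lt_of_le hl with h1 | h2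
  · subst_vars
    norm_num
  · -- ℓ ≥ 2
    have hl2 : 2 ≤ ℓ := h2
    have hA : (∑ m ∈ Finset.range ((ℓ - 1) / 2 + 1),
          C ((ℓ - 1 - m).choose m : ℝ) * X ^ m * (X - 1) ^ (m + 1))
        = ∑ m ∈ Finset.range (ℓ + 1),
          C ((ℓ - 1 - m).choose m : ℝ) * X ^ m * (X - 1) ^ (m + 1) := by
      apply Finset.sum_subset (Finset.range_subset_range.2 (by omega))
      intro m hm hnm
      simp only [Finset.mem_range, not_lt] at hm hnm
      rw [Nat.choose_eq_zero_of_lt (by omega)]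
      simp
    have hB : (∑ m ∈ Finset.Icc 1 (ℓ / 2),
          C ((ℓ - 1 - m).choose (m - 1) : ℝ) * X ^ m * (X - 1) ^ m)
        = ∑ m ∈ Finset.Icc 1 (ℓ + 1),
          C ((ℓ - 1 - m).choose (m - 1) : ℝ) * X ^ m * (X - 1) ^ m := by
      apply Finset.sum_subset (Finset.Icc_subset_Icc_right (by omega))
      intro m hm hnm
      simp only [Finset.mem_Icc] at hm hnm
      rw [Nat.choose_eq_zero_of_lt (by omega)]
      simp
    rw [hA, hB]
    exact Pext ℓ hl2
end

section
/- Let n ≥ 1 and let P ∈ ℝ[x_1,...,x_n] be a polynomial with P(0,...,0) ≠ 0 which vanishes at every point of {0,1}^n other than the origin. Then deg P ≥ n. -/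
open Finset MvPolynomial

lemma prod_ite_pow {n : ℕ} (S : Finset (Fin n)) (d : Fin n →₀ ℕ) :
    (∏ i : Fin n, (if i ∈ S then (1:ℝ) else 0) ^ d i)
      = if d.support ⊆ S then 1 else 0 := by
  classical
  by_cases h : d.support ⊆ S
  · rw [if_pos h]
    apply Finset.prod_eq_one
    intro i _
    by_cases hi : i ∈ S
    · simp [hi]
    · have hd : d i = 0 := by
        by_contra hd
        exact hi (h (Finsupp.mem_support_iff.2 hd))
      simp [hd]
  · rw [if_neg h]
    obtain ⟨i, hi, hiS⟩ := not_subset.1 h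
    apply Finset.prod_eq_zero (Finset.mem_univ i)
    rw [if_neg hiS]
    exact zero_pow (Finsupp.mem_support_iff.1 hi)

lemma key (n : ℕ) (P : MvPolynomial (Fin n) ℝ) (h : P.totalDegree < n) :
    ∑ S : Finset (Fin n), (-1:ℝ)^S.card *
      MvPolynomial.eval (fun i => if i ∈ S then 1 else 0) P = 0 := by
  classical
  simp only [eval_eq']
  simp only [Finset.mul_sum]
  rw [Finset.sum_comm]
  apply Finset.sum_eq_zero
  intro d hd
  -- d.support ≠ univ
  have hsub : d.support ⊂ Finset.univ := by
    rw [Finset.ssubset_univ_iff]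
    intro heq
    have h1 : n ≤ ∑ i ∈ d.support, d i := by
      calc n = d.support.card := by rw [heq]; simp
        _ = ∑ _i ∈ d.support, 1 := by rw [Finset.sum_const, smul_eq_mul, mul_one]
        _ ≤ ∑ i ∈ d.support, d i := Finset.sum_le_sum (fun i hi =>
            Nat.one_le_iff_ne_zero.2 (Finsupp.mem_support_iff.1 hi))
    have h2 : (∑ i ∈ d.support, d i) ≤ P.totalDegree :=
      MvPolynomial.le_totalDegree hd
    omega
  have hne : (d.supportᶜ : Finset (Fin n)).Nonempty := by
    rw [← Finset.card_pos, Finset.card_compl]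
    have := Finset.card_lt_card hsub
    simp only [Finset.card_univ, Fintype.card_fin] at this ⊢
    omega
  have step : ∀ S : Finset (Fin n),
      (-1:ℝ)^S.card * (MvPolynomial.coeff d P *
        ∏ i : Fin n, (if i ∈ S then (1:ℝ) else 0) ^ d i)
      = if d.support ⊆ S then (-1:ℝ)^S.card * MvPolynomial.coeff d P else 0 := by
    intro S
    rw [prod_ite_pow]
    split <;> ring
  simp only [step]
  rw [Finset.sum_ite, Finset.sum_const_zero, add_zero]
  rw [Finset.sum_nbij' (i := fun S => S \ d.support) (j := fun T => T ∪ d.support)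
    (t := (d.supportᶜ).powerset)
    (g := fun T => (-1:ℝ)^(T.card + d.support.card) * MvPolynomial.coeff d P)]
  · have : ∀ T ∈ (d.supportᶜ : Finset (Fin n)).powerset,
        (-1:ℝ)^(T.card + d.support.card) * MvPolynomial.coeff d P
        = ((-1:ℝ)^T.card) * ((-1:ℝ)^d.support.card * MvPolynomial.coeff d P) := by
      intro T _; rw [pow_add]; ring
    rw [Finset.sum_congr rfl this, ← Finset.sum_mul]
    have hz : (∑ T ∈ (d.supportᶜ : Finset (Fin n)).powerset, (-1:ℝ)^T.card) = 0 := by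
      have := Finset.sum_powerset_neg_one_pow_card_of_nonempty hne
      have := congrArg (Int.cast : ℤ → ℝ) this
      push_cast at this
      simpa using this
    rw [hz, zero_mul]
  · intro S hS
    simp only [Finset.mem_filter, Finset.mem_univ, true_and] at hS
    rw [Finset.mem_powerset]
    intro i hi
    rw [Finset.mem_sdiff] at hi
    simpa using hi.2
  · intro T hT
    simp only [Finset.mem_filter, Finset.mem_univ, true_and]
    exact Finset.subset_union_right
  · intro S hS
    simp only [Finset.mem_filter, Finset.mem_univ, true_and] at hS
    exact Finset.sdiff_union_of_subset hS
  · intro T hT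
    rw [Finset.mem_powerset] at hT
    rw [Finset.union_sdiff_right, Finset.sdiff_eq_self_iff_disjoint]
    exact Finset.disjoint_left.2 fun i hi => Finset.mem_compl.1 (hT hi)
  · intro S hS
    simp only [Finset.mem_filter, Finset.mem_univ, true_and] at hS
    rw [Finset.card_sdiff_of_subset hS, Nat.sub_add_cancel (Finset.card_le_card hS)]

theorem alon_furedi (n : ℕ) (hn : 1 ≤ n) (P : MvPolynomial (Fin n) ℝ)
    (h0 : MvPolynomial.eval (0 : Fin n → ℝ) P ≠ 0)
    (hvan : ∀ a : Fin n → ℝ, (∀ i, a i = 0 ∨ a i = 1) → a ≠ 0 →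
      MvPolynomial.eval a P = 0) :
    n ≤ P.totalDegree := by
  by_contra hlt
  push_neg at hlt
  have hk := key n P hlt
  have : ∀ S : Finset (Fin n), S ≠ ∅ →
      MvPolynomial.eval (fun i => if i ∈ S then (1:ℝ) else 0) P = 0 := by
    intro S hS
    apply hvan
    · intro i; by_cases hi : i ∈ S <;> simp [hi]
    · intro hz
      obtain ⟨i, hi⟩ := Finset.nonempty_iff_ne_empty.2 hS
      have := congrFun hz i
      simp [hi] at this
  rw [Finset.sum_eq_single ∅] at hk
  · simp at hk
    exact h0 (by simpa using hk)
  · intro S _ hS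
    rw [this S hS, mul_zero]
  · simp
end

section
/- Let k ≥ 2 and n ≥ 1. Let P ∈ ℝ[x_1,...,x_n] have zeroes of multiplicity at least k at all points of {0,1}^n \ {(0,...,0)}, and a zero of multiplicity exactly k-1 at the origin. Then deg P ≥ n + 2k - 2. -/
/-- `P` has a zero of multiplicity at least `k` at `a`: every monomial of `P(x + a)`
has total degree at least `k`. -/
def hasZeroOfMultAtLeast {n : ℕ} {R : Type*} [CommRing R]
    (P : MvPolynomial (Fin n) R) (a : Fin n → R) (k : ℕ) : Prop :=
  ∀ d ∈ (MvPolynomial.bind₁ (fun i => MvPolynomial.X i + MvPolynomial.C (a i)) P).support,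
    k ≤ ∑ i, d i

open MvPolynomial

namespace SW

/-- weight of an exponent vector -/
def w {n : ℕ} (d : Fin n →₀ ℕ) : ℕ := ∑ i, d i

/-- shift of a polynomial by a vector -/
noncomputable def sh {n : ℕ} (a : Fin n → ℝ) (P : MvPolynomial (Fin n) ℝ) :
    MvPolynomial (Fin n) ℝ :=
  bind₁ (fun i => X i + C (a i)) P

/-- multiplicity at `a` is at least `k` -/
def mLB {n : ℕ} (P : MvPolynomial (Fin n) ℝ) (a : Fin n → ℝ) (k : ℕ) : Prop :=
  ∀ d ∈ (sh a P).support, k ≤ w d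

lemma hasZero_iff_mLB {n : ℕ} (P : MvPolynomial (Fin n) ℝ) (a : Fin n → ℝ) (k : ℕ) :
    hasZeroOfMultAtLeast P a k ↔ mLB P a k := Iff.rfl

lemma w_add {n : ℕ} (d e : Fin n →₀ ℕ) : w (d + e) = w d + w e := by
  simp [w, Finset.sum_add_distrib]

lemma sh_zero {n : ℕ} (P : MvPolynomial (Fin n) ℝ) : sh 0 P = P := by
  simp [sh, bind₁_X_left]

lemma mLB_zero_iff {n : ℕ} (P : MvPolynomial (Fin n) ℝ) (k : ℕ) :
    mLB P 0 k ↔ ∀ d ∈ P.support, k ≤ w d := by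
  unfold mLB
  rw [sh_zero]

lemma sh_sh {n : ℕ} (a b : Fin n → ℝ) (P : MvPolynomial (Fin n) ℝ) :
    sh a (sh b P) = sh (a + b) P := by
  unfold sh
  rw [← AlgHom.comp_apply]
  congr 1
  apply MvPolynomial.algHom_ext
  intro i
  simp [bind₁_X_right]
  ring

lemma sh_sub {n : ℕ} (a : Fin n → ℝ) (P Q : MvPolynomial (Fin n) ℝ) :
    sh a (P - Q) = sh a P - sh a Q := by simp [sh]

lemma sh_mul {n : ℕ} (a : Fin n → ℝ) (P Q : MvPolynomial (Fin n) ℝ) :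
    sh a (P * Q) = sh a P * sh a Q := by simp [sh]

lemma mLB_sub {n : ℕ} {P Q : MvPolynomial (Fin n) ℝ} {a : Fin n → ℝ} {k : ℕ}
    (hP : mLB P a k) (hQ : mLB Q a k) : mLB (P - Q) a k := by
  intro d hd
  rw [sh_sub] at hd
  rcases Finset.mem_union.1 (MvPolynomial.support_sub _ _ _ hd) with h | h
  · exact hP d h
  · exact hQ d h

lemma mLB_mul {n : ℕ} {P Q : MvPolynomial (Fin n) ℝ} {a : Fin n → ℝ} {j k : ℕ}
    (hP : mLB P a j) (hQ : mLB Q a k) : mLB (P * Q) a (j + k) := by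
  classical
  intro d hd
  rw [sh_mul] at hd
  obtain ⟨d₁, hd₁, d₂, hd₂, rfl⟩ := Finset.mem_add.1 (MvPolynomial.support_mul _ _ hd)
  rw [w_add]
  exact add_le_add (hP d₁ hd₁) (hQ d₂ hd₂)

lemma mLB_mono {n : ℕ} {P : MvPolynomial (Fin n) ℝ} {a : Fin n → ℝ} {j k : ℕ}
    (h : mLB P a k) (hjk : j ≤ k) : mLB P a j :=
  fun d hd => le_trans hjk (h d hd)

end SW

namespace SW

variable {m : ℕ}

/-- substitute `x₀ := c` -/
noncomputable def res (c : ℝ) : MvPolynomial (Fin (m+1)) ℝ →ₐ[ℝ] MvPolynomial (Fin m) ℝ :=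
  aeval (Fin.cases (C c) X)

lemma res_monomial (c : ℝ) (d : Fin (m+1) →₀ ℕ) (r : ℝ) :
    res c (monomial d r) = (c ^ (d 0)) • monomial (Finsupp.tail d) r := by
  classical
  rw [res, aeval_monomial]
  rw [Finsupp.prod_fintype _ _ (fun i => pow_zero _)]
  rw [Fin.prod_univ_succ]
  simp only [Fin.cases_zero, Fin.cases_succ]
  have : (monomial (Finsupp.tail d)) r = C r * ∏ i : Fin m, X i ^ (Finsupp.tail d i) := by
    rw [monomial_eq]
    congr 1
    rw [Finsupp.prod_fintype _ _ (fun i => pow_zero _)]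
  rw [this]
  simp only [Finsupp.tail_apply, algebraMap_eq, MvPolynomial.smul_eq_C_mul, C_pow]
  ring

lemma w_cons (j : ℕ) (e : Fin m →₀ ℕ) : w (Finsupp.cons j e) = j + w e := by
  show (∑ i, (Finsupp.cons j e) i) = j + ∑ i, e i
  rw [Fin.sum_univ_succ]
  simp [Finsupp.cons_zero, Finsupp.cons_succ]

lemma w_tail_add (d : Fin (m+1) →₀ ℕ) : w d = d 0 + w (Finsupp.tail d) := by
  conv_lhs => rw [← Finsupp.cons_tail d]
  rw [w_cons]

/-- coefficient of the x₀ := 0 restriction -/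
lemma coeff_res_zero (Q : MvPolynomial (Fin (m+1)) ℝ) (e : Fin m →₀ ℕ) :
    coeff e (res 0 Q) = coeff (Finsupp.cons 0 e) Q := by
  classical
  conv_lhs => rw [Q.as_sum]
  rw [map_sum]
  rw [Finset.sum_congr rfl (fun d _ => res_monomial 0 d _), MvPolynomial.coeff_sum]
  simp only [MvPolynomial.coeff_smul]
  rw [Finset.sum_eq_single (Finsupp.cons 0 e)]
  · by_cases h : Finsupp.cons 0 e ∈ Q.support
    · simp [Finsupp.cons_zero, Finsupp.tail_cons, coeff_monomial]
    · rw [MvPolynomial.notMem_support_iff.1 h]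
      simp [MvPolynomial.coeff_zero]
  · intro d _ hne
    by_cases h0 : d 0 = 0
    · rw [h0]
      rw [coeff_monomial, if_neg, smul_zero]
      intro h
      exact hne (by rw [← Finsupp.cons_tail d, h0, h])
    · rw [zero_pow h0, zero_smul]
  · intro h
    rw [MvPolynomial.notMem_support_iff.1 h]
    simp

/-- support of restriction at 0: weights come from original support -/
lemma supp_res_zero {Q : MvPolynomial (Fin (m+1)) ℝ} {e : Fin m →₀ ℕ}
    (he : e ∈ (res 0 Q).support) : Finsupp.cons 0 e ∈ Q.support ∧ w (Finsupp.cons 0 e) = w e := by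
  rw [MvPolynomial.mem_support_iff, coeff_res_zero] at he
  exact ⟨MvPolynomial.mem_support_iff.2 he, by rw [w_cons, zero_add]⟩

/-- shift commutes with restriction -/
lemma sh_res (c : ℝ) (b : Fin m → ℝ) (P : MvPolynomial (Fin (m+1)) ℝ) :
    sh b (res c P) = res 0 (sh (Fin.cons c b) P) := by
  rw [sh, sh, ← AlgHom.comp_apply, ← AlgHom.comp_apply]
  congr 1
  apply MvPolynomial.algHom_ext
  intro i
  rw [AlgHom.comp_apply, AlgHom.comp_apply]
  show bind₁ _ (res c (X i)) = res 0 (bind₁ _ (X i))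
  rw [bind₁_X_right]
  induction i using Fin.cases with
  | zero =>
    rw [show res c (X (0 : Fin (m+1))) = C c from by simp [res], Fin.cons_zero]
    simp [sh, res, bind₁_C_right]
  | succ j =>
    rw [show res c (X (Fin.succ j)) = X j from by simp [res], Fin.cons_succ]
    simp [res, bind₁_X_right]

/-- restriction multiplicity lemma -/
lemma mLB_res {P : MvPolynomial (Fin (m+1)) ℝ} {c : ℝ} {b : Fin m → ℝ} {k : ℕ}
    (h : mLB P (Fin.cons c b) k) : mLB (res c P) b k := by
  intro e he
  rw [sh_res] at he
  obtain ⟨hmem, hw⟩ := supp_res_zero he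
  rw [← hw]
  exact h _ hmem

end SW
namespace SW

lemma w_eq_sum {n : ℕ} (d : Fin n →₀ ℕ) : w d = d.sum (fun _ v => v) := by
  rw [w, Finsupp.sum_fintype]
  intro i; rfl

lemma w_mapDomain {n N : ℕ} (f : Fin n → Fin N) (d : Fin n →₀ ℕ) :
    w (Finsupp.mapDomain f d) = w d := by
  rw [w_eq_sum, w_eq_sum, Finsupp.sum_mapDomain_index (fun _ => rfl) (fun _ _ _ => rfl)]

lemma sh_rename {n N : ℕ} (f : Fin n → Fin N) (a : Fin N → ℝ) (A : MvPolynomial (Fin n) ℝ) :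
    sh a (rename f A) = rename f (sh (a ∘ f) A) := by
  show (bind₁ _).comp (rename f) A = ((rename f).comp (bind₁ _)) A
  congr 1
  apply MvPolynomial.algHom_ext
  intro i
  rw [AlgHom.comp_apply, AlgHom.comp_apply, rename_X, bind₁_X_right, bind₁_X_right]
  simp [Function.comp]

lemma mLB_rename {n N : ℕ} {f : Fin n → Fin N} (hf : Function.Injective f)
    {a : Fin N → ℝ} {A : MvPolynomial (Fin n) ℝ} {k : ℕ} (h : mLB A (a ∘ f) k) :
    mLB (rename f A) a k := by
  classical
  intro d hd
  rw [sh_rename] at hd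
  rw [support_rename_of_injective hf] at hd
  obtain ⟨e, he, rfl⟩ := Finset.mem_image.1 hd
  rw [w_mapDomain]
  exact h e he

lemma mLB_rename_rev {n N : ℕ} {f : Fin n → Fin N} (hf : Function.Injective f)
    {a : Fin N → ℝ} {A : MvPolynomial (Fin n) ℝ} {k : ℕ} (h : mLB (rename f A) a k) :
    mLB A (a ∘ f) k := by
  classical
  intro d hd
  have : Finsupp.mapDomain f d ∈ (sh a (rename f A)).support := by
    rw [sh_rename, support_rename_of_injective hf]
    exact Finset.mem_image_of_mem _ hd
  have := h _ this
  rwa [w_mapDomain] at this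

end SW
namespace SW

variable {m : ℕ}

lemma totalDegree_le_of_w {n : ℕ} {Q : MvPolynomial (Fin n) ℝ} {D : ℕ}
    (h : ∀ e ∈ Q.support, w e ≤ D) : Q.totalDegree ≤ D := by
  apply Finset.sup_le
  intro e he
  rw [show (e.sum fun _ v => v) = w e from (w_eq_sum e).symm]
  exact h e he

lemma exists_w_eq_totalDegree {n : ℕ} {Q : MvPolynomial (Fin n) ℝ} (hQ : Q ≠ 0) :
    ∃ e ∈ Q.support, w e = Q.totalDegree := by
  obtain ⟨e, he, hsup⟩ := Finset.exists_mem_eq_sup Q.support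
    (MvPolynomial.support_nonempty.2 hQ) (fun s => s.sum fun _ v => v)
  refine ⟨e, he, ?_⟩
  rw [w_eq_sum, MvPolynomial.totalDegree]
  exact hsup.symm

lemma w_le_totalDegree {n : ℕ} {Q : MvPolynomial (Fin n) ℝ} {e : Fin n →₀ ℕ}
    (he : e ∈ Q.support) : w e ≤ Q.totalDegree := by
  rw [w_eq_sum]; exact MvPolynomial.le_totalDegree he

/-- formula for the difference of the two restrictions -/
lemma G_eq (P : MvPolynomial (Fin (m+1)) ℝ) :
    res 1 P - res 0 P =
      ∑ d ∈ P.support.filter (fun d => d 0 ≠ 0), monomial (Finsupp.tail d) (coeff d P) := by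
  classical
  conv_lhs => rw [P.as_sum, map_sum, map_sum]
  rw [Finset.sum_congr rfl (fun d _ => res_monomial 1 d _),
      Finset.sum_congr rfl (fun d _ => res_monomial 0 d _)]
  simp only [one_pow, one_smul, zero_pow_eq, ite_smul, one_smul, zero_smul]
  rw [← Finset.sum_sub_distrib, Finset.sum_filter]
  apply Finset.sum_congr rfl
  intro d _
  by_cases h : d 0 = 0 <;> simp [h]

/-- every monomial of G := B - A has weight < deg P -/
lemma G_supp_w {P : MvPolynomial (Fin (m+1)) ℝ} {e : Fin m →₀ ℕ}
    (he : e ∈ (res 1 P - res 0 P).support) : w e + 1 ≤ P.totalDegree := by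
  classical
  rw [G_eq] at he
  rw [MvPolynomial.mem_support_iff, MvPolynomial.coeff_sum] at he
  obtain ⟨d, hd, hne⟩ := Finset.exists_ne_zero_of_sum_ne_zero he
  rw [Finset.mem_filter] at hd
  rw [MvPolynomial.coeff_monomial] at hne
  have hed : e = Finsupp.tail d := by by_contra h; exact hne (if_neg (fun hh => h hh.symm))
  have hw := w_le_totalDegree hd.1
  rw [w_tail_add] at hw
  have : 1 ≤ d 0 := Nat.one_le_iff_ne_zero.2 hd.2
  rw [hed]
  omega

end SW
namespace SW

variable {m : ℕ}

lemma w_single (i : Fin (m+1)) (j : ℕ) : w (Finsupp.single i j) = j := by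
  rw [w_eq_sum, Finsupp.sum_single_index]
  rfl

lemma w_sub_single0 {d : Fin (m+1) →₀ ℕ} (h : d 0 ≠ 0) : w (d - Finsupp.single 0 1) + 1 = w d := by
  have h1 : (d - (Finsupp.single 0 1 : Fin (m+1) →₀ ℕ)) 0 = d 0 - 1 := by
    rw [Finsupp.tsub_apply, Finsupp.single_apply, if_pos rfl]
  have h2 : Finsupp.tail (d - (Finsupp.single 0 1 : Fin (m+1) →₀ ℕ)) = Finsupp.tail d := by
    ext j
    rw [Finsupp.tail_apply, Finsupp.tail_apply, Finsupp.tsub_apply, Finsupp.single_apply,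
      if_neg (by exact fun hh => (Fin.succ_ne_zero j) hh.symm), Nat.sub_zero]
  have h4 := w_tail_add (d - Finsupp.single 0 1)
  have h3 := w_tail_add d
  rw [h2] at h4
  have hd1 : 1 ≤ d 0 := Nat.one_le_iff_ne_zero.2 h
  omega

lemma X0_dvd {N : MvPolynomial (Fin (m+1)) ℝ} (h : ∀ d ∈ N.support, d 0 ≠ 0) :
    (X 0 : MvPolynomial (Fin (m+1)) ℝ) ∣ N := by
  classical
  conv_rhs => rw [N.as_sum]
  apply Finset.dvd_sum
  intro d hd
  rw [MvPolynomial.X_dvd_monomial]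
  exact Or.inr (h d hd)

lemma supp_ne_zero_of_res_zero {N : MvPolynomial (Fin (m+1)) ℝ} (h : res 0 N = 0) :
    ∀ d ∈ N.support, d 0 ≠ 0 := by
  intro d hd h0
  rw [MvPolynomial.mem_support_iff] at hd
  apply hd
  have := coeff_res_zero N (Finsupp.tail d)
  rw [h, MvPolynomial.coeff_zero] at this
  rw [← Finsupp.cons_tail d, h0, ← this]

/-- the quadratic factor -/
noncomputable def Phi : MvPolynomial (Fin (m+1)) ℝ := X 0 * (X 0 - C 1)

lemma phi_dvd {N : MvPolynomial (Fin (m+1)) ℝ} (h0 : res 0 N = 0) (h1 : res 1 N = 0) :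
    (Phi : MvPolynomial (Fin (m+1)) ℝ) ∣ N := by
  have hcop : IsCoprime (X 0 : MvPolynomial (Fin (m+1)) ℝ) (X 0 - C 1) :=
    ⟨1, -1, by rw [MvPolynomial.C_1]; ring⟩
  apply hcop.mul_dvd
  · exact X0_dvd (supp_ne_zero_of_res_zero h0)
  · -- shift by e₀ and use X0 ∣ shifted
    set E : Fin (m+1) → ℝ := Fin.cons 1 0 with hE
    have hres : res 0 (sh E N) = 0 := by
      have := sh_res (m := m) 1 0 N
      rw [sh_zero] at this
      rw [← this, h1]
    obtain ⟨M', hM'⟩ := X0_dvd (supp_ne_zero_of_res_zero hres)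
    have : N = sh (-E) (sh E N) := by rw [sh_sh, neg_add_cancel, sh_zero]
    rw [this, hM', sh_mul]
    have : sh (-E) (X 0 : MvPolynomial (Fin (m+1)) ℝ) = X 0 - C 1 := by
      rw [sh, bind₁_X_right]
      have hE0 : (-E) 0 = -1 := by simp [hE, Fin.cons_zero]
      rw [hE0, show ((-1 : ℝ)) = -(1:ℝ) from rfl, map_neg]
      ring
    rw [this]
    exact Dvd.intro _ rfl

/-- low-degree coefficient extraction through multiplication by x₀² + c x₀ -/
lemma PM1 {g : MvPolynomial (Fin (m+1)) ℝ} {c : ℝ} (hc : c ≠ 0) {s : ℕ}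
    (h : ∀ e ∈ ((g * X 0) * X 0 + C c * (g * X 0)).support, s + 1 ≤ w e) :
    ∀ d ∈ g.support, s ≤ w d := by
  classical
  by_contra hcon
  push_neg at hcon
  obtain ⟨d0, hd0, hw0⟩ := hcon
  have hne : (g.support.filter (fun d => w d < s)).Nonempty :=
    ⟨d0, Finset.mem_filter.2 ⟨hd0, hw0⟩⟩
  obtain ⟨d, hd, hmin⟩ := Finset.exists_min_image _ w hne
  rw [Finset.mem_filter] at hd
  -- coefficient at d + single 0 1
  have key : coeff (d + Finsupp.single 0 1) ((g * X 0) * X 0 + C c * (g * X 0)) =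
      c * coeff d g := by
    rw [MvPolynomial.coeff_add, MvPolynomial.coeff_C_mul, MvPolynomial.coeff_mul_X,
      MvPolynomial.coeff_mul_X]
    have h2 : coeff d (g * X 0) = 0 := by
      rw [MvPolynomial.coeff_mul_X']
      by_cases hd00 : (0 : Fin (m+1)) ∈ d.support
      · rw [if_pos hd00]
        by_contra hne2
        have hmem : d - Finsupp.single 0 1 ∈ g.support := MvPolynomial.mem_support_iff.2 hne2
        have hwlt : w (d - Finsupp.single 0 1) < w d := by
          have := w_sub_single0 (Finsupp.mem_support_iff.1 hd00)
          omega
        have hlt : w (d - Finsupp.single 0 1) < s := lt_trans hwlt hd.2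
        have := hmin _ (Finset.mem_filter.2 ⟨hmem, hlt⟩)
        omega
      · rw [if_neg hd00]
    rw [h2, zero_add]
  have hco : coeff d g ≠ 0 := MvPolynomial.mem_support_iff.1 hd.1
  have : (d + Finsupp.single 0 1) ∈ ((g * X 0) * X 0 + C c * (g * X 0)).support :=
    MvPolynomial.mem_support_iff.2 (by rw [key]; exact mul_ne_zero hc hco)
  have := h _ this
  rw [w_add, w_single] at this
  omega

end SW
namespace SW

variable {m : ℕ}

lemma sh_phi_form {ε : ℝ} (hε : ε = 0 ∨ ε = 1) (b : Fin m → ℝ)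
    (R : MvPolynomial (Fin (m+1)) ℝ) :
    sh (Fin.cons ε b) (Phi * R) =
      (sh (Fin.cons ε b) R * X 0) * X 0 + C (2*ε-1) * (sh (Fin.cons ε b) R * X 0) := by
  have hX : sh (Fin.cons ε b) (X 0 : MvPolynomial (Fin (m+1)) ℝ) = X 0 + C ε := by
    rw [sh, bind₁_X_right, Fin.cons_zero]
  have hC : sh (Fin.cons ε b) (C 1 : MvPolynomial (Fin (m+1)) ℝ) = C 1 := by
    rw [sh, bind₁_C_right]
  rw [show Phi * R = X 0 * (X 0 - C 1) * R from rfl, sh_mul, sh_mul, sh_sub, hX, hC]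
  rcases hε with h | h <;> subst h
  · rw [MvPolynomial.C_0, show ((2:ℝ)*0-1) = -1 from by norm_num,
      show (C (-1) : MvPolynomial (Fin (m+1)) ℝ) = -1 from by
        rw [show ((-1:ℝ)) = -(1:ℝ) from rfl, map_neg, MvPolynomial.C_1],
      MvPolynomial.C_1]
    ring
  · rw [show ((2:ℝ)*1-1) = 1 from by norm_num, MvPolynomial.C_1]
    ring

lemma mLB_X0_zero : mLB (X 0 : MvPolynomial (Fin (m+1)) ℝ) 0 1 := by
  rw [mLB_zero_iff]
  intro d hd
  rw [MvPolynomial.support_X, Finset.mem_singleton] at hd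
  subst hd
  rw [w_single]

lemma mLB_phi_zero : mLB (Phi : MvPolynomial (Fin (m+1)) ℝ) 0 1 := by
  have := mLB_mul (mLB_X0_zero (m := m))
    (show mLB ((X 0 - C 1) : MvPolynomial (Fin (m+1)) ℝ) 0 0 from fun d _ => Nat.zero_le _)
  exact this

lemma mLB_quot {ε : ℝ} (hε : ε = 0 ∨ ε = 1) {b : Fin m → ℝ}
    {R : MvPolynomial (Fin (m+1)) ℝ} {s : ℕ}
    (h : mLB (Phi * R) (Fin.cons ε b) (s+1)) : mLB R (Fin.cons ε b) s := by
  have hc : (2*ε-1 : ℝ) ≠ 0 := by rcases hε with h' | h' <;> subst h' <;> norm_num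
  have hsh := sh_phi_form hε b R
  intro d hd
  refine PM1 hc ?_ d hd
  intro e he
  exact h e (by rw [hsh]; exact he)

lemma deg_phi_mul {R : MvPolynomial (Fin (m+1)) ℝ} (hR : R ≠ 0) :
    R.totalDegree + 2 ≤ (Phi * R).totalDegree := by
  classical
  obtain ⟨d, hd, hw⟩ := exists_w_eq_totalDegree hR
  have hform : (Phi : MvPolynomial (Fin (m+1)) ℝ) * R =
      (R * X 0) * X 0 + C (-1) * (R * X 0) := by
    rw [show (Phi : MvPolynomial (Fin (m+1)) ℝ) = X 0 * (X 0 - C 1) from rfl,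
      MvPolynomial.C_1]
    rw [show (C (-1) : MvPolynomial (Fin (m+1)) ℝ) = -1 from by
      rw [show ((-1:ℝ)) = -(1:ℝ) from rfl, map_neg, MvPolynomial.C_1]]
    ring
  set e : Fin (m+1) →₀ ℕ := d + Finsupp.single 0 1 + Finsupp.single 0 1 with he
  have hco : coeff e (Phi * R) = coeff d R := by
    rw [hform, MvPolynomial.coeff_add, MvPolynomial.coeff_C_mul, he,
      MvPolynomial.coeff_mul_X, MvPolynomial.coeff_mul_X, MvPolynomial.coeff_mul_X]
    have : coeff (d + Finsupp.single 0 1) R = 0 := by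
      by_contra hne
      have := w_le_totalDegree (MvPolynomial.mem_support_iff.2 hne)
      rw [w_add, w_single] at this
      omega
    rw [this, mul_zero, add_zero]
  have hmem : e ∈ (Phi * R).support :=
    MvPolynomial.mem_support_iff.2 (by rw [hco]; exact MvPolynomial.mem_support_iff.1 hd)
  have := w_le_totalDegree hmem
  rw [he, w_add, w_add, w_single] at this
  omega

end SW
namespace SW

variable {m : ℕ}

/-- the inductive statement -/
def Stmt (n k : ℕ) : Prop := ∀ P : MvPolynomial (Fin n) ℝ,
  (∀ a : Fin n → ℝ, (∀ i, a i = 0 ∨ a i = 1) → a ≠ 0 → mLB P a k) →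
  mLB P 0 (k-1) → ¬ mLB P 0 k → n + 2*k ≤ P.totalDegree + 2

lemma cube_cons {c : ℝ} (hc : c = 0 ∨ c = 1) {b : Fin m → ℝ}
    (hb : ∀ i, b i = 0 ∨ b i = 1) : ∀ i, (Fin.cons c b : Fin (m+1) → ℝ) i = 0 ∨
      (Fin.cons c b : Fin (m+1) → ℝ) i = 1 := by
  intro i
  induction i using Fin.cases with
  | zero => rw [Fin.cons_zero]; exact hc
  | succ j => rw [Fin.cons_succ]; exact hb j

lemma cons_one_ne_zero (b : Fin m → ℝ) : (Fin.cons 1 b : Fin (m+1) → ℝ) ≠ 0 := by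
  intro h
  have := congrFun h 0
  rw [Fin.cons_zero] at this
  exact one_ne_zero this

lemma cons_zero_ne_zero {b : Fin m → ℝ} (hb : b ≠ 0) :
    (Fin.cons 0 b : Fin (m+1) → ℝ) ≠ 0 := by
  intro h
  apply hb
  funext j
  have := congrFun h (Fin.succ j)
  rwa [Fin.cons_succ] at this

lemma cons_zero_zero : (Fin.cons 0 0 : Fin (m+1) → ℝ) = 0 := by
  funext i
  induction i using Fin.cases with
  | zero => rw [Fin.cons_zero]; rfl
  | succ j => rw [Fin.cons_succ]; rfl

lemma cons_comp_succ (c : ℝ) (b : Fin m → ℝ) :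
    (Fin.cons c b : Fin (m+1) → ℝ) ∘ Fin.succ = b := by
  funext j
  simp [Function.comp, Fin.cons_succ]

lemma coeff_B_w_zero {P : MvPolynomial (Fin (m+1)) ℝ} {k : ℕ} (hB : mLB (res 1 P) 0 k)
    {e : Fin m →₀ ℕ} (hw : w e < k) : coeff e (res 1 P) = 0 := by
  by_contra h
  have := (mLB_zero_iff _ _).1 hB e (MvPolynomial.mem_support_iff.2 h)
  omega

/-- good case: some monomial of lowest degree misses variable 0 -/
lemma good_case {k : ℕ} (hk : 1 ≤ k) (P : MvPolynomial (Fin (m+1)) ℝ)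
    (hvan : ∀ a : Fin (m+1) → ℝ, (∀ i, a i = 0 ∨ a i = 1) → a ≠ 0 → mLB P a k)
    (h0 : mLB P 0 (k-1))
    {dw : Fin (m+1) →₀ ℕ} (hdsupp : dw ∈ P.support) (hdw : w dw = k-1) (hdz : dw 0 = 0)
    (IH : Stmt m k) : (m+1) + 2*k ≤ P.totalDegree + 2 := by
  classical
  set A := res 0 P with hA
  set B := res 1 P with hB
  have hA0 : mLB A 0 (k-1) := by
    apply mLB_res (c := 0) (b := 0)
    rwa [cons_zero_zero]
  have hB0 : mLB B 0 k := by
    apply mLB_res (c := 1) (b := 0)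
    exact hvan _ (cube_cons (Or.inr rfl) (fun i => Or.inl rfl)) (cons_one_ne_zero _)
  have hvanG : ∀ b : Fin m → ℝ, (∀ i, b i = 0 ∨ b i = 1) → b ≠ 0 → mLB (B - A) b k := by
    intro b hb hbne
    apply mLB_sub
    · exact mLB_res (hvan _ (cube_cons (Or.inr rfl) hb) (cons_one_ne_zero _))
    · exact mLB_res (hvan _ (cube_cons (Or.inl rfl) hb) (cons_zero_ne_zero hbne))
  have h0G : mLB (B - A) 0 (k-1) := mLB_sub (mLB_mono hB0 (Nat.sub_le _ _)) hA0
  have hcA : coeff (Finsupp.tail dw) A = coeff dw P := by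
    rw [hA, coeff_res_zero]
    congr 1
    rw [← hdz, Finsupp.cons_tail]
  have hwt : w (Finsupp.tail dw) = k - 1 := by
    have := w_tail_add dw
    omega
  have hcG : coeff (Finsupp.tail dw) (B - A) ≠ 0 := by
    rw [MvPolynomial.coeff_sub, hcA, coeff_B_w_zero hB0 (by omega), zero_sub, neg_ne_zero]
    exact MvPolynomial.mem_support_iff.1 hdsupp
  have h0'G : ¬ mLB (B - A) 0 k := by
    intro h
    have := (mLB_zero_iff _ _).1 h _ (MvPolynomial.mem_support_iff.2 hcG)
    omega
  have hIH := IH (B - A) hvanG h0G h0'G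
  have hGne : (B - A) ≠ 0 := fun h => hcG (by rw [h, MvPolynomial.coeff_zero])
  obtain ⟨e, he, hwe⟩ := exists_w_eq_totalDegree hGne
  have := G_supp_w (P := P) (e := e) (by rwa [hA, hB] at he)
  omega

end SW
namespace SW

variable {m : ℕ}

lemma res_rename (c : ℝ) (Q : MvPolynomial (Fin m) ℝ) :
    res c (rename Fin.succ Q) = Q := by
  show ((res c).comp (rename Fin.succ : MvPolynomial (Fin m) ℝ →ₐ[ℝ] _)) Q
    = (AlgHom.id ℝ _) Q
  congr 1
  apply MvPolynomial.algHom_ext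
  intro j
  rw [AlgHom.comp_apply, rename_X]
  show res c (X (Fin.succ j)) = X j
  simp [res]

lemma res_X0 (c : ℝ) : res c (X 0 : MvPolynomial (Fin (m+1)) ℝ) = C c := by
  simp [res]

lemma mLB_trivial {n : ℕ} (Q : MvPolynomial (Fin n) ℝ) (a : Fin n → ℝ) : mLB Q a 0 :=
  fun _ _ => Nat.zero_le _

lemma d_apply_le_w {n : ℕ} (d : Fin n →₀ ℕ) (i : Fin n) : d i ≤ w d :=
  Finset.single_le_sum (f := fun j => d j) (fun _ _ => Nat.zero_le _) (Finset.mem_univ i)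

/-- bad case: every lowest-degree monomial contains variable 0 -/
lemma bad_case {k : ℕ} (hk : 2 ≤ k) (P : MvPolynomial (Fin (m+1)) ℝ)
    (hvan : ∀ a : Fin (m+1) → ℝ, (∀ i, a i = 0 ∨ a i = 1) → a ≠ 0 → mLB P a k)
    (h0 : mLB P 0 (k-1))
    {dw : Fin (m+1) →₀ ℕ} (hdsupp : dw ∈ P.support) (hdw : w dw = k-1)
    (hbad : ∀ d ∈ P.support, w d = k-1 → d 0 ≠ 0)
    (IH : Stmt (m+1) (k-1)) : (m+1) + 2*k ≤ P.totalDegree + 2 := by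
  classical
  set A := res 0 P with hA
  set B := res 1 P with hB
  -- boost : A has multiplicity ≥ k at 0
  have hA0 : mLB A 0 k := by
    rw [mLB_zero_iff]
    intro e he
    obtain ⟨hmem, hwe⟩ := supp_res_zero (Q := P) (e := e) (by rw [hA] at he; exact he)
    have hge := (mLB_zero_iff _ _).1 h0 _ hmem
    rw [w_cons, zero_add] at hwe
    by_cases heq : w (Finsupp.cons 0 e) = k - 1
    · exact absurd (Finsupp.cons_zero 0 e) (hbad _ hmem heq)
    · rw [w_cons, zero_add] at heq hge
      omega
  have hAfull : ∀ b : Fin m → ℝ, (∀ i, b i = 0 ∨ b i = 1) → mLB A b k := by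
    intro b hb
    by_cases hbz : b = 0
    · rwa [hbz]
    · exact mLB_res (hvan _ (cube_cons (Or.inl rfl) hb) (cons_zero_ne_zero hbz))
  have hBfull : ∀ b : Fin m → ℝ, (∀ i, b i = 0 ∨ b i = 1) → mLB B b k := by
    intro b hb
    exact mLB_res (hvan _ (cube_cons (Or.inr rfl) hb) (cons_one_ne_zero _))
  have hGfull : ∀ b : Fin m → ℝ, (∀ i, b i = 0 ∨ b i = 1) → mLB (B - A) b k :=
    fun b hb => mLB_sub (hBfull b hb) (hAfull b hb)
  set Ah : MvPolynomial (Fin (m+1)) ℝ := rename Fin.succ A with hAh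
  set Gh : MvPolynomial (Fin (m+1)) ℝ := rename Fin.succ (B - A) with hGh
  set N : MvPolynomial (Fin (m+1)) ℝ := P - Ah - X 0 * Gh with hN
  -- multiplicities of N on the whole cube
  have hNfull : ∀ a : Fin (m+1) → ℝ, (∀ i, a i = 0 ∨ a i = 1) → a ≠ 0 → mLB N a k := by
    intro a ha hane
    have hb : ∀ i, (a ∘ Fin.succ) i = 0 ∨ (a ∘ Fin.succ) i = 1 := fun i => ha (Fin.succ i)
    apply mLB_sub (mLB_sub (hvan a ha hane) _) _
    · exact mLB_rename (Fin.succ_injective m) (hAfull _ hb)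
    · have := mLB_mul (mLB_trivial (X 0) a)
        (mLB_rename (Fin.succ_injective m) (hGfull (a ∘ Fin.succ) hb))
      rwa [zero_add] at this
  have hN0k1 : mLB N 0 (k-1) := by
    apply mLB_sub (mLB_sub h0 _) _
    · exact mLB_mono (mLB_rename (Fin.succ_injective m) (hA0)) (Nat.sub_le _ _)
    · apply mLB_mono _ (Nat.sub_le k 1)
      have := mLB_mul (mLB_trivial (X 0) (0 : Fin (m+1) → ℝ))
        (mLB_rename (Fin.succ_injective m) (hGfull 0 (fun i => Or.inl rfl)))
      rwa [zero_add] at this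
  -- the witness monomial survives in N
  have hAh0 : mLB Ah 0 k := mLB_rename (Fin.succ_injective m) hA0
  have hXG0 : mLB (X 0 * Gh) 0 k := by
    have := mLB_mul (mLB_trivial (X 0) (0 : Fin (m+1) → ℝ))
      (mLB_rename (Fin.succ_injective m) (hGfull 0 (fun i => Or.inl rfl)))
    rwa [zero_add] at this
  have hcoN : coeff dw N ≠ 0 := by
    have hc1 : coeff dw Ah = 0 := by
      by_contra h
      have := (mLB_zero_iff _ _).1 hAh0 dw (MvPolynomial.mem_support_iff.2 h)
      omega
    have hc2 : coeff dw (X 0 * Gh) = 0 := by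
      by_contra h
      have := (mLB_zero_iff _ _).1 hXG0 dw (MvPolynomial.mem_support_iff.2 h)
      omega
    rw [hN, MvPolynomial.coeff_sub, MvPolynomial.coeff_sub, hc1, hc2, sub_zero, sub_zero]
    exact MvPolynomial.mem_support_iff.1 hdsupp
  have hNne : N ≠ 0 := fun h => hcoN (by rw [h, MvPolynomial.coeff_zero])
  -- divisibility
  have hres0 : res 0 N = 0 := by
    rw [hN, map_sub, map_sub, map_mul, res_X0, res_rename, ← hA, MvPolynomial.C_0,
      zero_mul, sub_zero, sub_self]
  have hres1 : res 1 N = 0 := by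
    rw [hN, hAh, hGh, map_sub, map_sub, map_mul, res_X0, res_rename, res_rename,
      ← hB, MvPolynomial.C_1, one_mul]
    ring
  obtain ⟨R, hR⟩ := phi_dvd hres0 hres1
  have hRne : R ≠ 0 := fun h => hNne (by rw [hR, h, mul_zero])
  -- multiplicities of R
  have hvanR : ∀ a : Fin (m+1) → ℝ, (∀ i, a i = 0 ∨ a i = 1) → a ≠ 0 → mLB R a (k-1) := by
    intro a ha hane
    have ha' : a = Fin.cons (a 0) (Fin.tail a) := (Fin.cons_self_tail a).symm
    rw [ha']
    apply mLB_quot (ha 0)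
    rw [show (k-1) + 1 = k from by omega, ← hR, ← ha']
    exact hNfull a ha hane
  have h0R : mLB R 0 (k-2) := by
    rw [← cons_zero_zero]
    apply mLB_quot (Or.inl rfl)
    rw [show (k-2) + 1 = k - 1 from by omega, ← hR, cons_zero_zero]
    exact hN0k1
  have h0'R : ¬ mLB R 0 (k-1) := by
    intro h
    have := mLB_mul (mLB_phi_zero (m := m)) h
    rw [show 1 + (k-1) = k from by omega, ← hR] at this
    have := (mLB_zero_iff _ _).1 this dw (MvPolynomial.mem_support_iff.2 hcoN)
    omega
  have hIH := IH R hvanR (by rw [show k - 1 - 1 = k - 2 from by omega]; exact h0R) h0'R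
  -- degrees
  have hdegAh : Ah.totalDegree ≤ P.totalDegree := by
    apply le_trans (totalDegree_rename_le _ _)
    apply totalDegree_le_of_w
    intro e he
    obtain ⟨hmem, hwe⟩ := supp_res_zero (Q := P) (e := e) (by rw [hA] at he; exact he)
    rw [← hwe]
    exact w_le_totalDegree hmem
  have hdegXG : (X 0 * Gh).totalDegree ≤ P.totalDegree := by
    by_cases hG : (B - A) = 0
    · rw [hGh, hG, map_zero, mul_zero]
      exact Nat.zero_le _
    · apply le_trans (totalDegree_mul _ _)
      have h1 : (X 0 : MvPolynomial (Fin (m+1)) ℝ).totalDegree = 1 := totalDegree_X 0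
      have h2 : Gh.totalDegree ≤ (B - A).totalDegree := totalDegree_rename_le _ _
      obtain ⟨e, he, hwe⟩ := exists_w_eq_totalDegree hG
      have := G_supp_w (P := P) (e := e) (by rwa [hA, hB] at he)
      omega
  have hdegN : N.totalDegree ≤ P.totalDegree := by
    rw [hN]
    refine le_trans (totalDegree_sub _ _) (max_le (le_trans (totalDegree_sub _ _) ?_) hdegXG)
    exact max_le le_rfl hdegAh
  have hdegR := deg_phi_mul hRne
  rw [← hR] at hdegR
  omega

end SW
namespace SW

lemma main : ∀ (Nb n k : ℕ), n + k ≤ Nb → 1 ≤ k → Stmt n k := by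
  intro Nb
  induction Nb with
  | zero => intro n k hnk hk; exact absurd hnk (by omega)
  | succ Nb ih =>
    intro n k hnk hk P hvan h0 h0'
    -- find a monomial of weight exactly k-1
    obtain ⟨dw, hdsupp, hdw⟩ : ∃ d ∈ P.support, w d = k - 1 := by
      rw [mLB_zero_iff] at h0'
      push_neg at h0'
      obtain ⟨d, hd, hwd⟩ := h0'
      exact ⟨d, hd, by have := (mLB_zero_iff _ _).1 h0 d hd; omega⟩
    cases n with
    | zero =>
      have hd0 : dw = 0 := by ext i; exact absurd i.2 (by omega)
      have hw0 : w dw = 0 := by rw [hd0]; simp [w]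
      have hk1 : k = 1 := by omega
      rw [hk1]
      omega
    | succ m =>
      by_cases hgood : ∃ i, ∃ d ∈ P.support, w d = k - 1 ∧ d i = 0
      · obtain ⟨i, d, hd, hwd', hdz⟩ := hgood
        set e := Equiv.swap (0 : Fin (m+1)) i with he
        set P' := rename (⇑e) P with hP'
        have hIH : Stmt m k := fun Q hv h1 h2 => ih m k (by omega) hk Q hv h1 h2
        have h0comp : ((0 : Fin (m+1) → ℝ) ∘ ⇑e) = 0 := rfl
        have hvan' : ∀ a : Fin (m+1) → ℝ, (∀ j, a j = 0 ∨ a j = 1) → a ≠ 0 → mLB P' a k := by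
          intro a ha hane
          apply mLB_rename e.injective
          apply hvan (a ∘ ⇑e) (fun j => ha (e j))
          intro hcomp
          apply hane
          funext j
          have := congrFun hcomp (e.symm j)
          simpa using this
        have h0P' : mLB P' 0 (k-1) := by
          apply mLB_rename e.injective
          rwa [h0comp]
        have h0'P' : ¬ mLB P' 0 k := by
          intro h
          apply h0'
          have := mLB_rename_rev e.injective h
          rwa [h0comp] at this
        have hwit : Finsupp.mapDomain (⇑e) d ∈ P'.support := by
          rw [MvPolynomial.mem_support_iff, hP', coeff_rename_mapDomain _ e.injective]
          exact MvPolynomial.mem_support_iff.1 hd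
        have hwitw : w (Finsupp.mapDomain (⇑e) d) = k - 1 := by rw [w_mapDomain]; exact hwd'
        have hwitz : (Finsupp.mapDomain (⇑e) d) 0 = 0 := by
          rw [Finsupp.mapDomain_equiv_apply]
          have : e.symm 0 = i := by rw [he]; simp
          rw [this]
          exact hdz
        have := good_case hk P' hvan' h0P' hwit hwitw hwitz hIH
        have hdeg : P'.totalDegree ≤ P.totalDegree := totalDegree_rename_le _ _
        omega
      · push_neg at hgood
        have hk2 : 2 ≤ k := by
          rcases Nat.lt_or_ge k 2 with h | h
          · exfalso
            have hk1 : k = 1 := by omega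
            have := hgood 0 dw hdsupp hdw
            have hle := d_apply_le_w dw 0
            rw [hdw, hk1] at hle
            omega
          · exact h
        have hIH : Stmt (m+1) (k-1) :=
          fun Q hv h1 h2 => ih (m+1) (k-1) (by omega) (by omega) Q hv h1 h2
        exact bad_case hk2 P hvan h0 hdsupp hdw (fun d' hd' hw' => hgood 0 d' hd' hw') hIH

end SW

theorem lower_bound_mult_exactly_k_sub_one (k n : ℕ) (hk : 2 ≤ k) (hn : 1 ≤ n)
    (P : MvPolynomial (Fin n) ℝ)
    (hvan : ∀ a : Fin n → ℝ, (∀ i, a i = 0 ∨ a i = 1) → a ≠ 0 →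
      hasZeroOfMultAtLeast P a k)
    (h0 : hasZeroOfMultAtLeast P (0 : Fin n → ℝ) (k - 1))
    (h0' : ¬ hasZeroOfMultAtLeast P (0 : Fin n → ℝ) k) :
    n + 2 * k - 2 ≤ P.totalDegree := by
  have := SW.main (n + k) n k le_rfl (by omega) P
    (fun a ha hane => (SW.hasZero_iff_mLB P a k).1 (hvan a ha hane))
    ((SW.hasZero_iff_mLB P 0 (k-1)).1 h0)
    (fun h => h0' ((SW.hasZero_iff_mLB P 0 k).2 h))
  omega
end

section
/- Let k ≥ 2 and n ≥ 1. The polynomial P(x_1,...,x_n) = x_1^{k-1}(x_1-1)^{k-1} · (x_1-1)···(x_n-1) has degree n + 2k - 2, has zeroes of multiplicity at least k at all points of {0,1}^n \ {(0,...,0)}, and has a zero of multiplicity exactly k-1 at the origin. -/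
open MvPolynomial in
lemma deg_aux {n : ℕ} (q r : MvPolynomial (Fin n) ℝ) (m₁ m₂ : ℕ)
    (hq : ∀ d ∈ q.support, m₁ ≤ ∑ i, d i) (hr : ∀ d ∈ r.support, m₂ ≤ ∑ i, d i) :
    ∀ d ∈ (q * r).support, m₁ + m₂ ≤ ∑ i, d i := by
  classical
  intro d hd
  have hd' := MvPolynomial.support_mul q r hd
  obtain ⟨d₁, h₁, d₂, h₂, rfl⟩ := Finset.mem_add.mp hd'
  have : ∑ i, (d₁ + d₂) i = (∑ i, d₁ i) + ∑ i, d₂ i := by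
    simp [Finsupp.add_apply, Finset.sum_add_distrib]
  rw [this]
  exact add_le_add (hq d₁ h₁) (hr d₂ h₂)

open MvPolynomial in
lemma deg_X_pow {n : ℕ} (j : Fin n) (m : ℕ) :
    ∀ d ∈ ((X j : MvPolynomial (Fin n) ℝ) ^ m).support, m ≤ ∑ i, d i := by
  intro d hd
  rw [MvPolynomial.support_X_pow, Finset.mem_singleton] at hd
  subst hd
  simp [Finsupp.single_apply]

open MvPolynomial Polynomial in
lemma natDegree_aeval_le {n : ℕ} (P : MvPolynomial (Fin n) ℝ) :
    ((MvPolynomial.aeval (fun _ : Fin n => (Polynomial.X : Polynomial ℝ))) P).natDegree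
      ≤ P.totalDegree := by
  rw [MvPolynomial.aeval_def, MvPolynomial.eval₂_eq']
  apply Polynomial.natDegree_sum_le_of_forall_le
  intro d hd
  rw [Finset.prod_pow_eq_pow_sum]
  refine le_trans (Polynomial.natDegree_mul_le) ?_
  have h1 : ((algebraMap ℝ (Polynomial ℝ)) (MvPolynomial.coeff d P)).natDegree = 0 :=
    Polynomial.natDegree_C _
  rw [h1, zero_add]
  refine le_trans (Polynomial.natDegree_pow_le) ?_
  simp only [Polynomial.natDegree_X, mul_one]
  have := MvPolynomial.le_totalDegree hd
  rwa [Finsupp.sum_fintype _ _ (fun _ => rfl)] at this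

open MvPolynomial in
theorem explicit_polynomial_properties (k n : ℕ) (hk : 2 ≤ k) (hn : 1 ≤ n) :
    let P : MvPolynomial (Fin n) ℝ :=
      (X ⟨0, hn⟩) ^ (k - 1) * (X ⟨0, hn⟩ - 1) ^ (k - 1) * ∏ i : Fin n, (X i - 1)
    P.totalDegree = n + 2 * k - 2 ∧
    (∀ a : Fin n → ℝ, (∀ i, a i = 0 ∨ a i = 1) → a ≠ 0 →
      hasZeroOfMultAtLeast P a k) ∧
    hasZeroOfMultAtLeast P (0 : Fin n → ℝ) (k - 1) ∧
    ¬ hasZeroOfMultAtLeast P (0 : Fin n → ℝ) k := by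
  classical
  intro P
  set i0 : Fin n := ⟨0, hn⟩ with hi0
  obtain ⟨m, hm⟩ : ∃ m, k = m + 1 := ⟨k - 1, by omega⟩
  have hm1 : k - 1 = m := by omega
  have htriv : ∀ r : MvPolynomial (Fin n) ℝ, ∀ d ∈ r.support, 0 ≤ ∑ i, d i :=
    fun r d _ => Nat.zero_le _
  -- bind₁ at 0 is the identity
  have hbind0 : (MvPolynomial.bind₁
      (fun i => MvPolynomial.X i + MvPolynomial.C ((0 : Fin n → ℝ) i)) P) = P := by
    simp only [Pi.zero_apply, map_zero, add_zero]
    have : (fun i : Fin n => (MvPolynomial.X i : MvPolynomial (Fin n) ℝ)) = MvPolynomial.X :=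
      rfl
    rw [this, MvPolynomial.bind₁_X_left, AlgHom.id_apply]
  refine ⟨?_, ?_, ?_, ?_⟩
  · -- total degree
    apply le_antisymm
    · refine le_trans (totalDegree_mul _ _) ?_
      have h1 : (X i0 - 1 : MvPolynomial (Fin n) ℝ).totalDegree ≤ 1 := by
        have : (X i0 - 1 : MvPolynomial (Fin n) ℝ) = X i0 + C (-1) := by
          simp [sub_eq_add_neg]
        rw [this]
        refine le_trans (totalDegree_add _ _) ?_
        simp [totalDegree_X, totalDegree_C]
      have hX : ∀ i : Fin n, (X i - 1 : MvPolynomial (Fin n) ℝ).totalDegree ≤ 1 := by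
        intro i
        have : (X i - 1 : MvPolynomial (Fin n) ℝ) = X i + C (-1) := by
          simp [sub_eq_add_neg]
        rw [this]
        refine le_trans (totalDegree_add _ _) ?_
        simp [totalDegree_X, totalDegree_C]
      have h2 : ((X i0 : MvPolynomial (Fin n) ℝ) ^ (k-1)).totalDegree ≤ k - 1 := by
        refine le_trans (totalDegree_pow _ _) ?_
        simp [totalDegree_X]
      have h3 : ((X i0 - 1 : MvPolynomial (Fin n) ℝ) ^ (k-1)).totalDegree ≤ k - 1 := by
        refine le_trans (totalDegree_pow _ _) ?_
        calc (k-1) * (X i0 - 1 : MvPolynomial (Fin n) ℝ).totalDegree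
            ≤ (k-1) * 1 := Nat.mul_le_mul_left _ h1
          _ = k - 1 := by omega
      have h4 : (∏ i : Fin n, (X i - 1 : MvPolynomial (Fin n) ℝ)).totalDegree ≤ n := by
        refine le_trans (totalDegree_finset_prod _ _) ?_
        calc ∑ i : Fin n, (X i - 1 : MvPolynomial (Fin n) ℝ).totalDegree
            ≤ ∑ _i : Fin n, 1 := Finset.sum_le_sum (fun i _ => hX i)
          _ = n := by simp
      calc ((X i0 : MvPolynomial (Fin n) ℝ) ^ (k-1) * (X i0 - 1) ^ (k-1)).totalDegree
            + (∏ i : Fin n, (X i - 1 : MvPolynomial (Fin n) ℝ)).totalDegree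
          ≤ ((k-1) + (k-1)) + n := by
            exact add_le_add (le_trans (totalDegree_mul _ _) (add_le_add h2 h3)) h4
        _ = n + 2 * k - 2 := by omega
    · -- lower bound via substituting all variables by Polynomial.X
      have key := natDegree_aeval_le P
      have heval : (MvPolynomial.aeval (fun _ : Fin n => (Polynomial.X : Polynomial ℝ))) P
          = (Polynomial.X : Polynomial ℝ) ^ (k-1) * (Polynomial.X - 1) ^ (k-1)
            * (Polynomial.X - 1) ^ n := by
        simp only [P, map_mul, map_pow, map_sub, map_one, map_prod, MvPolynomial.aeval_X]
        rw [Finset.prod_const]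
        simp
      rw [heval] at key
      have hXne : (Polynomial.X : Polynomial ℝ) ≠ 0 := Polynomial.X_ne_zero
      have hX1ne : (Polynomial.X - 1 : Polynomial ℝ) ≠ 0 := by
        have := Polynomial.X_sub_C_ne_zero (1 : ℝ)
        simpa using this
      have hdeg : ((Polynomial.X : Polynomial ℝ) ^ (k-1) * (Polynomial.X - 1) ^ (k-1)
            * (Polynomial.X - 1) ^ n).natDegree = (k-1) + (k-1) + n := by
        rw [Polynomial.natDegree_mul (mul_ne_zero (pow_ne_zero _ hXne) (pow_ne_zero _ hX1ne))
            (pow_ne_zero _ hX1ne),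
          Polynomial.natDegree_mul (pow_ne_zero _ hXne) (pow_ne_zero _ hX1ne),
          Polynomial.natDegree_pow, Polynomial.natDegree_pow, Polynomial.natDegree_pow,
          Polynomial.natDegree_X]
        have : (Polynomial.X - 1 : Polynomial ℝ).natDegree = 1 := by
          have := Polynomial.natDegree_X_sub_C (1 : ℝ)
          simpa using this
        rw [this]
        ring
      rw [hdeg] at key
      omega
  · -- multiplicity at least k at nonzero 0/1 points
    intro a ha hne
    intro d hd
    set Q := (MvPolynomial.bind₁
      (fun i => MvPolynomial.X i + MvPolynomial.C (a i))) P with hQdef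
    have hQ : Q = (X i0 + C (a i0)) ^ (k-1) * (X i0 + C (a i0) - 1) ^ (k-1)
        * ∏ i : Fin n, (X i + C (a i) - 1) := by
      simp only [hQdef, P, map_mul, map_pow, map_sub, map_one, map_prod, MvPolynomial.bind₁_X_right]
      rfl
    rcases ha i0 with h0 | h0
    · -- a i0 = 0 : pick j with a j = 1
      obtain ⟨j, hj⟩ : ∃ j, a j ≠ 0 := by
        by_contra hcon
        push_neg at hcon
        exact hne (funext hcon)
      have hj1 : a j = 1 := (ha j).resolve_left hj
      have hQ' : Q = (X i0) ^ (k-1) * ((X j) ^ 1 *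
          ((X i0 - 1) ^ (k-1) * ∏ i ∈ Finset.univ.erase j, (X i + C (a i) - 1))) := by
        rw [hQ, ← Finset.mul_prod_erase Finset.univ _ (Finset.mem_univ j), h0, hj1]
        simp only [map_zero, map_one, add_zero]
        ring
      rw [hQ'] at hd
      have := deg_aux _ _ (k-1) (1 + 0)
        (deg_X_pow i0 (k-1))
        (deg_aux _ _ 1 0 (deg_X_pow j 1) (htriv _)) d hd
      omega
    · -- a i0 = 1
      have hQ' : Q = (X i0) ^ k * ((X i0 + 1) ^ (k-1) *
          ∏ i ∈ Finset.univ.erase i0, (X i + C (a i) - 1)) := by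
        rw [hQ, ← Finset.mul_prod_erase Finset.univ _ (Finset.mem_univ i0), h0]
        simp only [map_one, add_sub_cancel_right]
        rw [hm1, hm]
        ring
      rw [hQ'] at hd
      have := deg_aux _ _ k 0 (deg_X_pow i0 k) (htriv _) d hd
      omega
  · -- multiplicity at least k-1 at 0
    intro d hd
    rw [hbind0] at hd
    have hP : P = (X i0) ^ (k-1) * ((X i0 - 1) ^ (k-1) * ∏ i : Fin n, (X i - 1)) := by
      simp only [P]; ring
    rw [hP] at hd
    have := deg_aux _ _ (k-1) 0 (deg_X_pow i0 (k-1)) (htriv _) d hd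
    omega
  · -- not multiplicity at least k at 0
    intro h
    have hmem : (Finsupp.single i0 (k-1)) ∈ (MvPolynomial.bind₁
        (fun i => MvPolynomial.X i + MvPolynomial.C ((0 : Fin n → ℝ) i)) P).support := by
      rw [hbind0, MvPolynomial.mem_support_iff]
      have hP : P = (monomial (Finsupp.single i0 (k-1)) (1:ℝ)) *
          ((X i0 - 1) ^ (k-1) * ∏ i : Fin n, (X i - 1)) := by
        rw [← MvPolynomial.X_pow_eq_monomial]
        simp only [P]; ring
      have hcoeff : MvPolynomial.coeff (Finsupp.single i0 (k-1)) P
          = MvPolynomial.coeff 0 ((X i0 - 1 : MvPolynomial (Fin n) ℝ) ^ (k-1)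
            * ∏ i : Fin n, (X i - 1)) := by
        rw [hP]
        simpa using MvPolynomial.coeff_monomial_mul 0 (Finsupp.single i0 (k-1)) (1:ℝ)
          ((X i0 - 1 : MvPolynomial (Fin n) ℝ) ^ (k-1) * ∏ i : Fin n, (X i - 1))
      have hcc : MvPolynomial.coeff 0 ((X i0 - 1 : MvPolynomial (Fin n) ℝ) ^ (k-1)
          * ∏ i : Fin n, (X i - 1)) = (-1 : ℝ) ^ (k-1) * (-1) ^ n := by
        have : MvPolynomial.coeff (0 : Fin n →₀ ℕ)
            ((X i0 - 1 : MvPolynomial (Fin n) ℝ) ^ (k-1) * ∏ i : Fin n, (X i - 1))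
            = MvPolynomial.constantCoeff
              ((X i0 - 1 : MvPolynomial (Fin n) ℝ) ^ (k-1) * ∏ i : Fin n, (X i - 1)) := rfl
        rw [this, map_mul, map_pow, map_prod]
        simp [MvPolynomial.constantCoeff_X]
      rw [hcoeff, hcc]
      exact mul_ne_zero (pow_ne_zero _ (by norm_num)) (pow_ne_zero _ (by norm_num))
    have := h _ hmem
    have hsum : ∑ i, (Finsupp.single i0 (k-1)) i = k - 1 := by
      rw [Finset.sum_eq_single i0 (fun b _ hb => Finsupp.single_eq_of_ne' (Ne.symm hb))
        (fun h => absurd (Finset.mem_univ i0) h), Finsupp.single_eq_same]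
    rw [hsum] at this
    omega
end

section
/- Let k ≥ 2 and n ≥ 1. The number of monomials x_1^{e_1}···x_n^{e_n} of total degree at most n+2k-3 that are not divisible by any product of k squares of variables (i.e., not divisible by x_{i_1}^2 ··· x_{i_k}^2 for any, not necessarily distinct, indices i_1,...,i_k) equals (2^n − 1) · M_k(n) + M_{k-1}(n), where M_t(n) denotes the number of n-tuples of non-negative integers summing to less than t. -/
/-- `M t n`: the number of `n`-tuples of non-negative integers with sum less than `t`. -/
noncomputable def Mnum (n t : ℕ) : ℕ := Nat.card {f : Fin n → ℕ // ∑ i, f i < t}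

lemma finite_sum_lt (n t : ℕ) : Finite {f : Fin n → ℕ // ∑ i, f i < t} := by
  apply Finite.of_injective (fun x : {f : Fin n → ℕ // ∑ i, f i < t} =>
    (fun i => (⟨x.1 i, lt_of_le_of_lt
      (Finset.single_le_sum (fun j _ => Nat.zero_le _) (Finset.mem_univ i)) x.2⟩ : Fin t)))
  intro x y h
  apply Subtype.ext
  funext i
  exact congrArg Fin.val (congrFun h i)

lemma exists_le_sum (n k : ℕ) : ∀ (m : ℕ) (g : Fin n → ℕ), ∑ i, g i = k + m →
    ∃ f : Fin n → ℕ, (∑ i, f i) = k ∧ ∀ i, f i ≤ g i := by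
  intro m
  induction m with
  | zero => exact fun g hg => ⟨g, by simpa using hg, fun i => le_rfl⟩
  | succ m ih =>
    intro g hg
    have hpos : ∃ i, 0 < g i := by
      by_contra h
      push_neg at h
      have : ∑ i, g i = 0 := Finset.sum_eq_zero (fun i _ => Nat.le_zero.mp (h i))
      omega
    obtain ⟨i, hi⟩ := hpos
    have herase : g i + ∑ j ∈ Finset.univ.erase i, g j = ∑ j, g j :=
      Finset.add_sum_erase _ _ (Finset.mem_univ i)
    have hupd : ∑ j, Function.update g i (g i - 1) j = k + m := by
      have h1 : Function.update g i (g i - 1) i + ∑ j ∈ Finset.univ.erase i,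
          Function.update g i (g i - 1) j = ∑ j, Function.update g i (g i - 1) j :=
        Finset.add_sum_erase _ _ (Finset.mem_univ i)
      have h2 : ∑ j ∈ Finset.univ.erase i, Function.update g i (g i - 1) j
          = ∑ j ∈ Finset.univ.erase i, g j :=
        Finset.sum_congr rfl (fun j hj =>
          Function.update_of_ne (Finset.ne_of_mem_erase hj) _ _)
      rw [Function.update_self] at h1
      omega
    obtain ⟨f, hf1, hf2⟩ := ih _ hupd
    refine ⟨f, hf1, fun j => le_trans (hf2 j) ?_⟩
    rcases eq_or_ne j i with rfl | hne
    · simp [Function.update_self]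
    · simp [Function.update_of_ne hne]

lemma div_two_cond (n k : ℕ) (d : Fin n → ℕ) :
    (¬ ∃ f : Fin n → ℕ, (∑ i, f i) = k ∧ ∀ i, 2 * f i ≤ d i) ↔ (∑ i, d i / 2) < k := by
  constructor
  · intro h
    by_contra hle
    push_neg at hle
    obtain ⟨m, hm⟩ := Nat.exists_eq_add_of_le hle
    obtain ⟨f, hf1, hf2⟩ := exists_le_sum n k m (fun i => d i / 2) hm
    exact h ⟨f, hf1, fun i => by have := hf2 i; omega⟩
  · rintro h ⟨f, hf1, hf2⟩
    have : ∑ i, f i ≤ ∑ i, d i / 2 :=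
      Finset.sum_le_sum (fun i _ => by have := hf2 i; omega)
    omega

/-- The number of monomials of total degree at most `n + 2k - 3` that are not divisible
by a product of `k` squares of variables equals `(2^n - 1) * M_k(n) + M_{k-1}(n)`. -/
theorem count_reduced_monomials (k n : ℕ) (hk : 2 ≤ k) (hn : 1 ≤ n) :
    Nat.card {d : Fin n → ℕ //
      (∑ i, d i ≤ n + 2 * k - 3) ∧
      ¬ ∃ f : Fin n → ℕ, (∑ i, f i) = k ∧ ∀ i, 2 * f i ≤ d i}
    = (2 ^ n - 1) * Mnum n k + Mnum n (k - 1) := by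
  classical
  -- the all-ones residue pattern
  set c : Fin n → Fin 2 := fun _ => (1 : Fin 2) with hc
  -- condition on (residues, halves)
  set C : (Fin n → Fin 2) → (Fin n → ℕ) → Prop :=
    fun r m => (∑ i, m i < k) ∧ ¬ (r = c ∧ ∑ i, m i = k - 1) with hC
  -- Step 1: rewrite the divisibility condition
  have e1 : {d : Fin n → ℕ //
      (∑ i, d i ≤ n + 2 * k - 3) ∧
      ¬ ∃ f : Fin n → ℕ, (∑ i, f i) = k ∧ ∀ i, 2 * f i ≤ d i} ≃
      {d : Fin n → ℕ // (∑ i, d i ≤ n + 2 * k - 3) ∧ (∑ i, d i / 2) < k} :=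
    Equiv.subtypeEquivRight (fun d => by rw [div_two_cond n k d])
  -- Step 2: decompose into residues and halves
  have key : ∀ d : Fin n → ℕ, ∑ i, d i = 2 * (∑ i, d i / 2) + ∑ i, d i % 2 := by
    intro d
    rw [Finset.mul_sum, ← Finset.sum_add_distrib]
    exact Finset.sum_congr rfl (fun i _ => by omega)
  have e2 : {d : Fin n → ℕ // (∑ i, d i ≤ n + 2 * k - 3) ∧ (∑ i, d i / 2) < k} ≃
      {p : (Fin n → Fin 2) × (Fin n → ℕ) // C p.1 p.2} := by
    refine ⟨fun d => ⟨(fun i => ⟨d.1 i % 2, Nat.mod_lt _ two_pos⟩, fun i => d.1 i / 2), ?_⟩,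
      fun p => ⟨fun i => 2 * p.1.2 i + (p.1.1 i : ℕ), ?_⟩, ?_, ?_⟩
    · obtain ⟨d, hd1, hd2⟩ := d
      refine ⟨hd2, ?_⟩
      rintro ⟨hall, hsum⟩
      have hsum' : ∑ i, d i / 2 = k - 1 := hsum
      have hmods : ∀ i, d i % 2 = 1 := fun i => by
        have h := congrFun hall i
        simpa [hc] using congrArg Fin.val h
      have hmn : (∑ i, d i % 2) = n := by
        rw [Finset.sum_congr rfl (fun i _ => hmods i)]
        simp
      have hk2 := key d
      omega
    · obtain ⟨⟨r, m⟩, hm, hne⟩ := p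
      have hm' : (∑ i, m i) < k := hm
      have hne' : ¬ (r = c ∧ ∑ i, m i = k - 1) := hne
      have hsum : ∑ i, (2 * m i + (r i : ℕ)) = 2 * (∑ i, m i) + ∑ i, (r i : ℕ) := by
        rw [Finset.mul_sum, ← Finset.sum_add_distrib]
      have hrb : (∑ i, (r i : ℕ)) ≤ n := by
        calc (∑ i, (r i : ℕ)) ≤ ∑ _i : Fin n, 1 :=
              Finset.sum_le_sum (fun i _ => Nat.lt_succ_iff.mp (r i).2)
          _ = n := by simp
      constructor
      · show ∑ i, (2 * m i + (r i : ℕ)) ≤ n + 2 * k - 3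
        rw [hsum]
        rcases eq_or_ne r c with rfl | hrc
        · have hms : ∑ i, m i ≠ k - 1 := fun h => hne' ⟨rfl, h⟩
          omega
        · -- some residue is 0, so ∑ r ≤ n - 1
          have hex : ∃ j, (r j : ℕ) = 0 := by
            by_contra h
            push_neg at h
            apply hrc
            funext j
            have h1 : (r j : ℕ) < 2 := (r j).2
            have h2 := h j
            exact Fin.ext (by simp [hc]; omega)
          obtain ⟨j, hj⟩ := hex
          have herase : (r j : ℕ) + ∑ i ∈ Finset.univ.erase j, (r i : ℕ) = ∑ i, (r i : ℕ) :=
            Finset.add_sum_erase Finset.univ (fun i => (r i : ℕ)) (Finset.mem_univ j)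
          have hcard : (Finset.univ.erase j).card = n - 1 := by
            rw [Finset.card_erase_of_mem (Finset.mem_univ j), Finset.card_univ,
              Fintype.card_fin]
          have h2 : (∑ i ∈ Finset.univ.erase j, (r i : ℕ)) ≤ n - 1 := by
            calc (∑ i ∈ Finset.univ.erase j, (r i : ℕ))
                ≤ ∑ _i ∈ Finset.univ.erase j, 1 :=
                  Finset.sum_le_sum (fun i _ => Nat.lt_succ_iff.mp (r i).2)
              _ = n - 1 := by rw [Finset.sum_const, smul_eq_mul, mul_one, hcard]
          omega
      · show (∑ i, (2 * m i + (r i : ℕ)) / 2) < k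
        have hdiv : (∑ i, (2 * m i + (r i : ℕ)) / 2) = ∑ i, m i :=
          Finset.sum_congr rfl (fun i _ => by have : (r i : ℕ) < 2 := (r i).2; omega)
        rw [hdiv]
        exact hm'
    · intro d
      apply Subtype.ext
      funext i
      simp only
      omega
    · intro p
      apply Subtype.ext
      apply Prod.ext
      · funext i
        apply Fin.ext
        have : (p.1.1 i : ℕ) < 2 := (p.1.1 i).2
        simp only
        omega
      · funext i
        have : (p.1.1 i : ℕ) < 2 := (p.1.1 i).2
        simp only
        omega
  -- Step 3: sigma decomposition
  have e3 : {p : (Fin n → Fin 2) × (Fin n → ℕ) // C p.1 p.2} ≃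
      Σ r : Fin n → Fin 2, {m : Fin n → ℕ // C r m} :=
    Equiv.subtypeProdEquivSigmaSubtype C
  -- finiteness of fibers
  have hfin : ∀ r : Fin n → Fin 2, Finite {m : Fin n → ℕ // C r m} := by
    intro r
    have : Finite {m : Fin n → ℕ // ∑ i, m i < k} := finite_sum_lt n k
    apply Finite.of_injective
      (fun x : {m : Fin n → ℕ // C r m} =>
        (⟨x.1, x.2.1⟩ : {m : Fin n → ℕ // ∑ i, m i < k}))
    intro x y h
    have h2 := congrArg Subtype.val h
    exact Subtype.ext h2
  letI : ∀ r : Fin n → Fin 2, Fintype {m : Fin n → ℕ // C r m} :=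
    fun r => @Fintype.ofFinite _ (hfin r)
  -- fiber cardinalities
  have fib_eq : ∀ r : Fin n → Fin 2,
      Nat.card {m : Fin n → ℕ // C r m} = if r = c then Mnum n (k - 1) else Mnum n k := by
    intro r
    rcases eq_or_ne r c with rfl | hrc
    · rw [if_pos rfl]
      unfold Mnum
      apply Nat.card_congr
      apply Equiv.subtypeEquivRight
      intro m
      show ((∑ i, m i < k) ∧ ¬ (c = c ∧ ∑ i, m i = k - 1)) ↔ (∑ i, m i < k - 1)
      constructor
      · rintro ⟨h1, h2⟩
        have h3 : ∑ i, m i ≠ k - 1 := fun h => h2 ⟨rfl, h⟩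
        omega
      · intro h
        refine ⟨by omega, ?_⟩
        rintro ⟨-, h2⟩
        omega
    · rw [if_neg hrc]
      unfold Mnum
      apply Nat.card_congr
      apply Equiv.subtypeEquivRight
      intro m
      show ((∑ i, m i < k) ∧ ¬ (r = c ∧ ∑ i, m i = k - 1)) ↔ (∑ i, m i < k)
      constructor
      · exact fun h => h.1
      · exact fun h => ⟨h, fun hh => hrc hh.1⟩
  -- put it together
  rw [Nat.card_congr (e1.trans (e2.trans e3))]
  rw [Nat.card_eq_fintype_card, Fintype.card_sigma]
  have hcards : ∀ r : Fin n → Fin 2,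
      Fintype.card {m : Fin n → ℕ // C r m} = if r = c then Mnum n (k - 1) else Mnum n k := by
    intro r
    rw [← Nat.card_eq_fintype_card, fib_eq r]
  rw [Finset.sum_congr rfl (fun r _ => hcards r)]
  rw [← Finset.add_sum_erase Finset.univ _ (Finset.mem_univ c)]
  rw [if_pos rfl]
  have herase : ∑ r ∈ Finset.univ.erase c,
      (if r = c then Mnum n (k - 1) else Mnum n k) = (2 ^ n - 1) * Mnum n k := by
    rw [Finset.sum_congr rfl (fun r hr => if_neg (Finset.ne_of_mem_erase hr))]
    rw [Finset.sum_const, smul_eq_mul]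
    congr 1
    rw [Finset.card_erase_of_mem (Finset.mem_univ c), Finset.card_univ]
    simp
  rw [herase]
  omega
end

section
/- Let n ≥ 1 and let d_1, ..., d_t be positive integers with d_1 + ... + d_t ≤ n. When the symmetric polynomial sum over distinct indices i_1,...,i_t ∈ {1,...,n} of x_{i_1}^{d_1}···x_{i_t}^{d_t} is written as a polynomial in the power sums p_1,...,p_n (where p_m = x_1^m + ... + x_n^m), the coefficient of p_{d_1+...+d_t} equals t! · (-1)^{t-1}/t = (-1)^{t-1}(t-1)!. -/
open MvPolynomial

lemma ringhom_inj_of_surj {A : Type*} [CommRing A] [IsNoetherianRing A]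
    (φ : A →+* A) (hs : Function.Surjective φ) : Function.Injective φ := by
  have hmono : Monotone (fun m : ℕ => RingHom.ker (φ ^ m)) := by
    apply monotone_nat_of_le_succ
    intro m x hx
    have hx' : φ^[m] x = 0 := hx
    show φ^[m+1] x = 0
    rw [Function.iterate_succ_apply', hx', map_zero]
  obtain ⟨N, hN⟩ := monotone_stabilizes_iff_noetherian.mpr inferInstance
    ⟨fun m : ℕ => RingHom.ker (φ ^ m), hmono⟩
  rw [injective_iff_map_eq_zero]
  intro x hx
  obtain ⟨y, hy⟩ := (hs.iterate N) x
  have hyk : y ∈ RingHom.ker (φ ^ (N + 1)) := by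
    show φ^[N+1] y = 0
    rw [Function.iterate_succ_apply', hy, hx]
  have hkk : RingHom.ker (φ ^ N) = RingHom.ker (φ ^ (N+1)) := hN (N+1) (Nat.le_succ N)
  rw [← hkk] at hyk
  have h2 : φ^[N] y = 0 := hyk
  rw [h2] at hy
  exact hy.symm


noncomputable def Ye (n m : ℕ) : MvPolynomial (Fin n) ℝ :=
  if h : m - 1 < n then X (⟨m - 1, h⟩ : Fin n) else 0

noncomputable def NN (n : ℕ) : ℕ → MvPolynomial (Fin n) ℝ
  | k =>
    (-1) ^ (k + 1) * (k : MvPolynomial (Fin n) ℝ) * Ye n k -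
    ∑ ab ∈ ((Finset.HasAntidiagonal.antidiagonal k).filter (fun ab => 0 < ab.1 ∧ ab.1 < k)).attach,
      (-1) ^ (ab.1.1) * Ye n ab.1.1 * NN n ab.1.2
  decreasing_by
    · have h := ab.2
      simp only [Finset.mem_filter, Finset.HasAntidiagonal.mem_antidiagonal] at h
      omega

lemma NN_def (n k : ℕ) : NN n k =
    (-1) ^ (k + 1) * (k : MvPolynomial (Fin n) ℝ) * Ye n k -
    ∑ ab ∈ ((Finset.HasAntidiagonal.antidiagonal k).filter (fun ab => 0 < ab.1 ∧ ab.1 < k)).attach,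
      (-1) ^ (ab.1.1) * Ye n ab.1.1 * NN n ab.1.2 := by
  rw [NN]

lemma aeval_Ye {n m : ℕ} (h1 : 1 ≤ m) (h2 : m ≤ n) :
    aeval (fun j : Fin n => esymm (Fin n) ℝ ((j : ℕ) + 1)) (Ye n m) = esymm (Fin n) ℝ m := by
  have h : m - 1 < n := by omega
  rw [Ye, dif_pos h, aeval_X]
  have h3 : ((⟨m - 1, h⟩ : Fin n) : ℕ) + 1 = m := by simp; omega
  rw [h3]

lemma eps_NN (n : ℕ) : ∀ k, 1 ≤ k → k ≤ n →
    aeval (fun j : Fin n => esymm (Fin n) ℝ ((j : ℕ) + 1)) (NN n k) = psum (Fin n) ℝ k := by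
  intro k
  induction k using Nat.strong_induction_on with
  | _ k ih =>
    intro hk1 hkn
    rw [NN_def, map_sub, map_mul, map_mul, map_pow, map_neg, map_one, map_natCast,
      aeval_Ye hk1 hkn, map_sum]
    rw [psum_eq_mul_esymm_sub_sum (Fin n) ℝ k hk1]
    congr 1
    rw [Finset.sum_attach ((Finset.HasAntidiagonal.antidiagonal k).filter (fun ab => 0 < ab.1 ∧ ab.1 < k))
      (fun ab => (aeval (fun j : Fin n => esymm (Fin n) ℝ ((j : ℕ) + 1)))
        ((-1) ^ ab.1 * Ye n ab.1 * NN n ab.2))]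
    have hset : (Finset.HasAntidiagonal.antidiagonal k).filter (fun ab => 0 < ab.1 ∧ ab.1 < k)
        = (Finset.HasAntidiagonal.antidiagonal k).filter (fun a => a.1 ∈ Set.Ioo 0 k) := by
      simp [Set.mem_Ioo]
    rw [hset]
    refine Finset.sum_congr rfl (fun a ha => ?_)
    simp only [Finset.mem_filter, Finset.HasAntidiagonal.mem_antidiagonal, Set.mem_Ioo] at ha
    rw [map_mul, map_mul, map_pow, map_neg, map_one, aeval_Ye (by omega) (by omega),
      ih a.2 (by omega) (by omega) (by omega)]

noncomputable def Asub (n k : ℕ) : Subalgebra ℝ (MvPolynomial (Fin n) ℝ) :=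
  Algebra.adjoin ℝ ((fun i : Fin n => (X i : MvPolynomial (Fin n) ℝ)) '' {i : Fin n | (i : ℕ) < k})

lemma Asub_mono {n k l : ℕ} (h : k ≤ l) : Asub n k ≤ Asub n l :=
  Algebra.adjoin_mono (Set.image_mono (fun i hi => lt_of_lt_of_le hi h))

lemma Ye_mem {n m k : ℕ} (h1 : 1 ≤ m) (h2 : m ≤ k) : Ye n m ∈ Asub n k := by
  rw [Ye]
  split
  · exact Algebra.subset_adjoin ⟨_, by simpa using by omega, rfl⟩
  · exact Subalgebra.zero_mem _

lemma NN_mem (n : ℕ) : ∀ k, 1 ≤ k → NN n k ∈ Asub n k := by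
  intro k
  induction k using Nat.strong_induction_on with
  | _ k ih =>
    intro hk1
    rw [NN_def]
    refine Subalgebra.sub_mem _ (Subalgebra.mul_mem _ (Subalgebra.mul_mem _
      (Subalgebra.pow_mem _ (Subalgebra.neg_mem _ (Subalgebra.one_mem _)) _)
      (Subalgebra.natCast_mem _ _)) (Ye_mem hk1 le_rfl)) (Subalgebra.sum_mem _ ?_)
    intro ab _
    have hab := ab.2
    simp only [Finset.mem_filter, Finset.HasAntidiagonal.mem_antidiagonal] at hab
    refine Subalgebra.mul_mem _ (Subalgebra.mul_mem _
      (Subalgebra.pow_mem _ (Subalgebra.neg_mem _ (Subalgebra.one_mem _)) _)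
      (Ye_mem (by omega) (by omega))) (Asub_mono (l := k) (by omega) (ih ab.1.2 (by omega) (by omega)))

lemma sum_mem_Asub (n k : ℕ) :
    (∑ ab ∈ ((Finset.HasAntidiagonal.antidiagonal k).filter (fun ab => 0 < ab.1 ∧ ab.1 < k)).attach,
      (-1) ^ (ab.1.1) * Ye n ab.1.1 * NN n ab.1.2) ∈ Asub n (k - 1) := by
  refine Subalgebra.sum_mem _ ?_
  intro ab _
  have hab := ab.2
  simp only [Finset.mem_filter, Finset.HasAntidiagonal.mem_antidiagonal] at hab
  refine Subalgebra.mul_mem _ (Subalgebra.mul_mem _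
    (Subalgebra.pow_mem _ (Subalgebra.neg_mem _ (Subalgebra.one_mem _)) _)
    (Ye_mem (by omega) (by omega)))
    (Asub_mono (l := k - 1) (by omega) (NN_mem n ab.1.2 (by omega)))

noncomputable def Theta (n : ℕ) : MvPolynomial (Fin n) ℝ →ₐ[ℝ] MvPolynomial (Fin n) ℝ :=
  aeval (fun j : Fin n => NN n ((j : ℕ) + 1))

lemma X_mem_range (n : ℕ) : ∀ k, k ≤ n → ∀ i : Fin n, (i : ℕ) < k → X i ∈ (Theta n).range := by
  intro k
  induction k using Nat.strong_induction_on with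
  | _ k ih =>
    intro hkn i hik
    rcases Nat.lt_or_ge (i : ℕ) (k - 1) with h | h
    · exact ih (k - 1) (by omega) (by omega) i h
    have hik' : (i : ℕ) = k - 1 := by omega
    have hk1 : 1 ≤ k := by omega
    -- NN n k = c * X i - S
    have hYe : Ye n k = X i := by
      rw [Ye, dif_pos (by omega : k - 1 < n)]
      congr 1
      exact Fin.ext_iff.mpr (show k - 1 = (i : ℕ) by omega)
    have hNN := NN_def n k
    rw [hYe] at hNN
    set S := ∑ ab ∈ ((Finset.HasAntidiagonal.antidiagonal k).filter (fun ab => 0 < ab.1 ∧ ab.1 < k)).attach,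
      (-1) ^ (ab.1.1) * Ye n ab.1.1 * NN n ab.1.2 with hS
    have hC : ((-1 : MvPolynomial (Fin n) ℝ)) ^ (k + 1) * (k : MvPolynomial (Fin n) ℝ)
        = C ((-1 : ℝ) ^ (k + 1) * k) := by
      simp
    have hX : X i = C (((-1 : ℝ) ^ (k + 1) * k)⁻¹) * (NN n k + S) := by
      rw [hNN, sub_add_cancel, hC, ← mul_assoc, ← C_mul, inv_mul_cancel₀, C_1, one_mul]
      have : ((-1 : ℝ) ^ (k + 1)) ≠ 0 := by positivity
      positivity
    rw [hX]
    have hSmem : S ∈ (Theta n).range := by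
      have h1 : Asub n (k - 1) ≤ (Theta n).range := by
        rw [Asub]
        apply Algebra.adjoin_le
        rintro _ ⟨j, hj, rfl⟩
        exact ih (k - 1) (by omega) (by omega) j hj
      exact h1 (sum_mem_Asub n k)
    have hNNmem : NN n k ∈ (Theta n).range := by
      rw [AlgHom.mem_range]
      refine ⟨X ⟨k - 1, by omega⟩, ?_⟩
      show aeval (fun j : Fin n => NN n ((j : ℕ) + 1)) (X ⟨k - 1, by omega⟩) = NN n k
      rw [aeval_X]
      show NN n ((k - 1) + 1) = NN n k
      congr 1
      omega
    exact Subalgebra.mul_mem _ (by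
      rw [← MvPolynomial.algebraMap_eq]; exact Subalgebra.algebraMap_mem _ _)
      (Subalgebra.add_mem _ hNNmem hSmem)

lemma Theta_surjective (n : ℕ) : Function.Surjective (Theta n) := by
  rw [← AlgHom.range_eq_top]
  rw [← top_le_iff, ← MvPolynomial.adjoin_range_X]
  apply Algebra.adjoin_le
  rintro _ ⟨i, rfl⟩
  exact X_mem_range n n le_rfl i i.2

lemma Theta_injective (n : ℕ) : Function.Injective (Theta n) :=
  ringhom_inj_of_surj (Theta n).toRingHom (Theta_surjective n)

lemma Psi_injective (n : ℕ) :
    Function.Injective (aeval (R := ℝ) (fun j : Fin n => psum (Fin n) ℝ ((j : ℕ) + 1))) := by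
  have heps : Function.Injective (aeval (R := ℝ) (fun j : Fin n => esymm (Fin n) ℝ ((j : ℕ) + 1))) := by
    intro p q h
    apply esymmAlgHom_fin_injective (R := ℝ) (m := n) (n := n) le_rfl
    apply Subtype.ext
    rw [esymmAlgHom_apply, esymmAlgHom_apply]
    exact h
  have hcomp : (aeval (R := ℝ) (fun j : Fin n => psum (Fin n) ℝ ((j : ℕ) + 1)))
      = (aeval (R := ℝ) (fun j : Fin n => esymm (Fin n) ℝ ((j : ℕ) + 1))).comp (Theta n) := by
    apply MvPolynomial.algHom_ext
    intro j
    rw [aeval_X, AlgHom.comp_apply, Theta, aeval_X, eps_NN n ((j : ℕ) + 1) (by omega) (by omega)]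
  rw [hcomp]
  exact heps.comp (Theta_injective n)

open Finset


-- sum over injective functions
noncomputable def FF (n t : ℕ) (d : Fin t → ℕ) : MvPolynomial (Fin n) ℝ :=
  ∑ f ∈ univ.filter (fun f : Fin t → Fin n => Function.Injective f), ∏ j, X (f j) ^ d j

lemma snoc_injective {n t : ℕ} {g : Fin t → Fin n} {i : Fin n}
    (hg : Function.Injective g) (hi : ∀ k, g k ≠ i) :
    Function.Injective (Fin.snoc g i : Fin (t + 1) → Fin n) := by
  intro a b hab
  induction a using Fin.lastCases with
  | last =>
    induction b using Fin.lastCases with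
    | last => rfl
    | cast b =>
      rw [Fin.snoc_last, Fin.snoc_castSucc] at hab
      exact absurd hab.symm (hi b)
  | cast a =>
    induction b using Fin.lastCases with
    | last =>
      rw [Fin.snoc_last, Fin.snoc_castSucc] at hab
      exact absurd hab (hi a)
    | cast b =>
      rw [Fin.snoc_castSucc, Fin.snoc_castSucc] at hab
      rw [hg hab]

lemma sum_inj_succ {n t : ℕ} (A : (Fin (t + 1) → Fin n) → MvPolynomial (Fin n) ℝ) :
    ∑ f ∈ univ.filter (fun f : Fin (t + 1) → Fin n => Function.Injective f), A f
    = ∑ g ∈ univ.filter (fun g : Fin t → Fin n => Function.Injective g),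
        ∑ i ∈ univ \ image g univ, A (Fin.snoc g i) := by
  rw [Finset.sum_sigma']
  refine Finset.sum_nbij' (i := fun f => (⟨fun j => f (Fin.castSucc j), f (Fin.last t)⟩ : (g : Fin t → Fin n) × Fin n))
    (j := fun p => Fin.snoc (α := fun _ => Fin n) p.1 p.2) ?_ ?_ ?_ ?_ ?_
  · -- hi : f injective ↦ pair in sigma
    intro f hf
    simp only [mem_filter, mem_univ, true_and] at hf
    simp only [Finset.mem_sigma, mem_filter, mem_univ, true_and, Finset.mem_sdiff,
      Finset.mem_image]
    refine ⟨hf.comp (Fin.castSucc_injective t), ?_⟩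
    rintro ⟨k, hk⟩
    exact (Fin.castSucc_lt_last k).ne (hf hk)
  · -- hj : pair ↦ snoc injective
    rintro ⟨g, i⟩ hp
    simp only [Finset.mem_sigma, mem_filter, mem_univ, true_and, Finset.mem_sdiff,
      Finset.mem_image] at hp
    obtain ⟨hg, hi⟩ := hp
    simp only [mem_filter, mem_univ, true_and]
    exact snoc_injective hg (fun k hk => hi ⟨k, hk⟩)
  · -- left inverse : j (i f) = f
    intro f hf
    funext j
    induction j using Fin.lastCases with
    | last => exact Fin.snoc_last _ _
    | cast j => exact Fin.snoc_castSucc _ _ j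
  · -- right inverse : i (j p) = p
    rintro ⟨g, i⟩ hp
    dsimp only
    congr 1
    · funext j; simp
    · simp
  · -- values
    intro f hf
    dsimp only
    congr 1
    funext j
    induction j using Fin.lastCases with
    | last => simp
    | cast j => simp

lemma prod_pow_update {n t : ℕ} (g : Fin t → Fin n) (d' : Fin t → ℕ) (k : Fin t) (m : ℕ) :
    (∏ j, (X (g j) : MvPolynomial (Fin n) ℝ) ^ d' j) * X (g k) ^ m
    = ∏ j, (X (g j) : MvPolynomial (Fin n) ℝ) ^ (Function.update d' k (d' k + m) j) := by
  have hupd : (fun j => (X (g j) : MvPolynomial (Fin n) ℝ) ^ (Function.update d' k (d' k + m) j))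
      = Function.update (fun j => (X (g j) : MvPolynomial (Fin n) ℝ) ^ d' j) k
          ((X (g k) : MvPolynomial (Fin n) ℝ) ^ (d' k + m)) := by
    funext j
    rcases eq_or_ne j k with rfl | hjk
    · simp
    · simp [Function.update_of_ne hjk]
  rw [show (∏ j, (X (g j) : MvPolynomial (Fin n) ℝ) ^ (Function.update d' k (d' k + m) j))
      = ∏ j, Function.update (fun j => (X (g j) : MvPolynomial (Fin n) ℝ) ^ d' j) k
          ((X (g k) : MvPolynomial (Fin n) ℝ) ^ (d' k + m)) j from by rw [← hupd]]
  rw [Finset.prod_update_of_mem (Finset.mem_univ k), Finset.sdiff_singleton_eq_erase]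
  rw [← Finset.mul_prod_erase Finset.univ _ (Finset.mem_univ k), pow_add]
  ring

lemma FF_succ (n t : ℕ) (d : Fin (t + 1) → ℕ) :
    FF n (t + 1) d = FF n t (fun j => d j.castSucc) * psum (Fin n) ℝ (d (Fin.last t))
      - ∑ k : Fin t, FF n t
          (Function.update (fun j => d j.castSucc) k (d k.castSucc + d (Fin.last t))) := by
  rw [FF, sum_inj_succ (A := fun f => ∏ j, X (f j) ^ d j)]
  have hterm : ∀ g : Fin t → Fin n, ∀ i : Fin n,
      (∏ j, (X (Fin.snoc (α := fun _ => Fin n) g i j) : MvPolynomial (Fin n) ℝ) ^ d j)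
      = (∏ j, (X (g j) : MvPolynomial (Fin n) ℝ) ^ d j.castSucc) * X i ^ d (Fin.last t) := by
    intro g i
    rw [Fin.prod_univ_castSucc]
    congr 1
    · exact Finset.prod_congr rfl (fun j _ => by rw [Fin.snoc_castSucc])
    · rw [Fin.snoc_last]
  have hinner : ∀ g ∈ univ.filter (fun g : Fin t → Fin n => Function.Injective g),
      ∑ i ∈ univ \ image g univ, ∏ j, (X (Fin.snoc (α := fun _ => Fin n) g i j) : MvPolynomial (Fin n) ℝ) ^ d j
      = (∏ j, (X (g j) : MvPolynomial (Fin n) ℝ) ^ d j.castSucc) * psum (Fin n) ℝ (d (Fin.last t))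
        - ∑ k : Fin t, ∏ j, (X (g j) : MvPolynomial (Fin n) ℝ) ^
            (Function.update (fun j => d j.castSucc) k (d k.castSucc + d (Fin.last t)) j) := by
    intro g hg
    simp only [mem_filter, mem_univ, true_and] at hg
    rw [Finset.sum_sdiff_eq_sub (Finset.subset_univ _)]
    congr 1
    · rw [Finset.sum_congr rfl (fun i _ => hterm g i), ← Finset.mul_sum, psum]
    · rw [Finset.sum_image (fun a _ b _ h => hg h),
        Finset.sum_congr rfl (fun k _ => (hterm g (g k)).trans (prod_pow_update g _ k _))]
  rw [Finset.sum_congr rfl hinner, Finset.sum_sub_distrib, ← Finset.sum_mul, Finset.sum_comm]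
  rfl

noncomputable def Q0 (n : ℕ) : (t : ℕ) → (Fin t → ℕ) → MvPolynomial (Fin n) ℝ
  | 0, _ => 1
  | (t + 1), d =>
      Q0 n t (fun j => d j.castSucc) * Ye n (d (Fin.last t))
      - ∑ k : Fin t, Q0 n t
          (Function.update (fun j => d j.castSucc) k (d k.castSucc + d (Fin.last t)))

lemma aeval_Ye_psum {n m : ℕ} (h1 : 1 ≤ m) (h2 : m ≤ n) :
    aeval (fun j : Fin n => psum (Fin n) ℝ ((j : ℕ) + 1)) (Ye n m) = psum (Fin n) ℝ m := by
  have h : m - 1 < n := by omega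
  rw [Ye, dif_pos h, aeval_X]
  have h3 : ((⟨m - 1, h⟩ : Fin n) : ℕ) + 1 = m := by simp; omega
  rw [h3]

lemma aeval_Q0 (n : ℕ) : ∀ t (d : Fin t → ℕ), (∀ j, 1 ≤ d j) → (∑ j, d j ≤ n) →
    aeval (fun j : Fin n => psum (Fin n) ℝ ((j : ℕ) + 1)) (Q0 n t d) = FF n t d := by
  intro t
  induction t with
  | zero =>
    intro d _ _
    rw [Q0, map_one, FF]
    have : (univ.filter (fun f : Fin 0 → Fin n => Function.Injective f)) = univ := by
      apply Finset.filter_true_of_mem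
      intro f _ a
      exact absurd a.2 (Nat.not_lt_zero _)
    rw [this]
    simp
  | succ t ih =>
    intro d hd hsum
    have hlast1 : 1 ≤ d (Fin.last t) := hd _
    have hlastn : d (Fin.last t) ≤ n := by
      refine le_trans ?_ hsum
      exact Finset.single_le_sum (f := d) (fun j _ => Nat.zero_le _) (Finset.mem_univ _)
    have hcast : ∑ j : Fin t, d j.castSucc ≤ n := by
      have := Fin.sum_univ_castSucc d
      omega
    rw [Q0, map_sub, map_mul, aeval_Ye_psum hlast1 hlastn, map_sum, FF_succ,
      ih _ (fun j => hd _) hcast]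
    congr 1
    refine Finset.sum_congr rfl (fun k _ => ?_)
    refine ih _ (fun j => ?_) ?_
    · rcases eq_or_ne j k with rfl | hjk
      · simp [Function.update_self]; omega
      · simpa [Function.update_of_ne hjk] using hd j.castSucc
    · rw [Finset.sum_update_of_mem (Finset.mem_univ k)]
      have h1 : ∑ j ∈ univ \ {k}, d j.castSucc ≤ ∑ j : Fin t, d j.castSucc := by
        apply Finset.sum_le_sum_of_subset
        exact Finset.sdiff_subset
      have h2 : d k.castSucc ≤ ∑ j : Fin t, d j.castSucc :=
        Finset.single_le_sum (f := fun j : Fin t => d j.castSucc)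
          (fun j _ => Nat.zero_le _) (Finset.mem_univ k)
      have h3 : ∑ j ∈ univ \ {k}, d j.castSucc + d k.castSucc = ∑ j : Fin t, d j.castSucc := by
        rw [Finset.sdiff_singleton_eq_erase, Finset.sum_erase_add]
        exact Finset.mem_univ k
      have := Fin.sum_univ_castSucc d
      omega

lemma Ye_eq_X {n m : ℕ} (h1 : 1 ≤ m) (h2 : m ≤ n) :
    Ye n m = X (⟨m - 1, by omega⟩ : Fin n) := by
  rw [Ye, dif_pos (by omega : m - 1 < n)]

lemma coeff_Q0 (n : ℕ) : ∀ t, ∀ d : Fin (t + 1) → ℕ, (∀ j, 1 ≤ d j) → (∑ j, d j ≤ n) →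
    ∀ i : Fin n, (i : ℕ) = (∑ j, d j) - 1 →
    (Q0 n (t + 1) d).coeff (Finsupp.single i 1) = (-1 : ℝ) ^ t * t.factorial := by
  intro t
  induction t with
  | zero =>
    intro d hd hsum i hi
    have hd0 : ∑ j, d j = d 0 := by simp
    have h1 : 1 ≤ d (Fin.last 0) := hd _
    have h2 : d (Fin.last 0) ≤ n := by
      rw [show Fin.last 0 = 0 from rfl, ← hd0]; exact hsum
    rw [Q0, Q0, one_mul, Ye_eq_X h1 h2]
    rw [show (∑ k : Fin 0, Q0 n 0
        (Function.update (fun j => d j.castSucc) k (d k.castSucc + d (Fin.last 0)))) = 0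
      from Finset.sum_empty]
    rw [sub_zero]
    have hie : (⟨d (Fin.last 0) - 1, by omega⟩ : Fin n) = i := by
      apply Fin.ext_iff.mpr
      show d (Fin.last 0) - 1 = (i : ℕ)
      rw [hi, hd0]
      rfl
    rw [hie, coeff_X]
    simp
  | succ t ih =>
    intro d hd hsum i hi
    set D := ∑ j, d j with hD
    have hlast1 : 1 ≤ d (Fin.last (t + 1)) := hd _
    have hlastn : d (Fin.last (t + 1)) ≤ n :=
      le_trans (Finset.single_le_sum (f := d) (fun j _ => Nat.zero_le _) (Finset.mem_univ _)) hsum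
    have hcastsum : ∑ j : Fin (t + 1), d j.castSucc + d (Fin.last (t + 1)) = D := by
      rw [hD, Fin.sum_univ_castSucc d]
    have hcastpos : t + 1 ≤ ∑ j : Fin (t + 1), d j.castSucc := by
      calc t + 1 = ∑ _j : Fin (t + 1), 1 := by simp
      _ ≤ _ := Finset.sum_le_sum (fun j _ => hd j.castSucc)
    have hdlastD : d (Fin.last (t + 1)) < D := by omega
    rw [Q0, coeff_sub, Ye_eq_X hlast1 hlastn, coeff_mul_X']
    rw [if_neg (by
      rw [Finsupp.mem_support_iff, Finsupp.single_apply]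
      rw [if_neg]
      · simp
      · intro h
        have := Fin.ext_iff.mp h
        simp only [Fin.val_mk] at this
        omega)]
    rw [MvPolynomial.coeff_sum]
    have hsum_upd : ∀ k : Fin (t + 1),
        ∑ j, (Function.update (fun j => d j.castSucc) k
          (d k.castSucc + d (Fin.last (t + 1)))) j = D := by
      intro k
      rw [Finset.sum_update_of_mem (Finset.mem_univ k), Finset.sdiff_singleton_eq_erase]
      have hsplit := Finset.add_sum_erase Finset.univ
        (fun j : Fin (t + 1) => d j.castSucc) (Finset.mem_univ k)
      omega
    have hterm : ∀ k : Fin (t + 1),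
        coeff (Finsupp.single i 1) (Q0 n (t + 1) (Function.update (fun j => d j.castSucc) k
          (d k.castSucc + d (Fin.last (t + 1))))) = (-1 : ℝ) ^ t * t.factorial := by
      intro k
      refine ih _ (fun j => ?_) (by rw [hsum_upd k]; exact hsum) i (by rw [hsum_upd k]; exact hi)
      rcases eq_or_ne j k with rfl | hjk
      · simp only [Function.update_self]; have := hd j.castSucc; omega
      · simpa [Function.update_of_ne hjk] using hd j.castSucc
    rw [Finset.sum_congr rfl (fun k _ => hterm k), Finset.sum_const, Finset.card_univ,
      Fintype.card_fin, nsmul_eq_mul]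
    rw [zero_sub, Nat.factorial_succ]
    push_cast
    ring

lemma emb_sum_eq_FF (n t : ℕ) (d : Fin t → ℕ) :
    (∑ e : Fin t ↪ Fin n, ∏ j, (X (e j) : MvPolynomial (Fin n) ℝ) ^ d j) = FF n t d := by
  rw [FF]
  refine Finset.sum_bij (fun (e : Fin t ↪ Fin n) _ => (⇑e : Fin t → Fin n)) ?_ ?_ ?_ ?_
  · intro e _
    simp only [Finset.mem_filter, Finset.mem_univ, true_and]
    exact e.injective
  · intro e1 _ e2 _ h
    exact DFunLike.coe_injective h
  · intro f hf
    simp only [Finset.mem_filter, Finset.mem_univ, true_and] at hf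
    exact ⟨⟨f, hf⟩, Finset.mem_univ _, rfl⟩
  · intro e _
    rfl

open MvPolynomial in
/-- When the symmetric polynomial `∑_{i₁,…,i_t distinct} x_{i₁}^{d₁} ⋯ x_{i_t}^{d_t}`
is written (uniquely) as a polynomial `Q` in the power sums `p₁, …, p_n`, the
coefficient of `p_{d₁+⋯+d_t}` equals `(-1)^{t-1} (t-1)!`. Here the variable `y_j`
(for `j : Fin n`) of `Q` stands for the power sum `p_{j+1}`. -/
theorem coeff_top_power_sum (n t : ℕ) (hn : 1 ≤ n) (ht : 1 ≤ t) (d : Fin t → ℕ)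
    (hd : ∀ j, 1 ≤ d j) (hsum : ∑ j, d j ≤ n)
    (Q : MvPolynomial (Fin n) ℝ)
    (hQ : MvPolynomial.aeval (fun j : Fin n => ∑ i : Fin n, (X i : MvPolynomial (Fin n) ℝ) ^ ((j : ℕ) + 1)) Q
        = ∑ e : Fin t ↪ Fin n, ∏ j, (X (e j) : MvPolynomial (Fin n) ℝ) ^ d j) :
    Q.coeff (Finsupp.single ⟨(∑ j, d j) - 1, by
      have h1 := Finset.single_le_sum (f := d) (fun j _ => Nat.zero_le _)
        (Finset.mem_univ ⟨0, ht⟩)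
      have h2 := hd ⟨0, ht⟩
      omega⟩ 1)
    = (-1 : ℝ) ^ (t - 1) * (t - 1).factorial := by
  obtain ⟨t', rfl⟩ : ∃ t', t = t' + 1 := ⟨t - 1, by omega⟩
  have hPsi : aeval (fun j : Fin n => psum (Fin n) ℝ ((j : ℕ) + 1)) Q = FF n (t' + 1) d := by
    rw [← emb_sum_eq_FF, ← hQ]
    rfl
  have hQeq : Q = Q0 n (t' + 1) d :=
    Psi_injective n (hPsi.trans (aeval_Q0 n (t' + 1) d hd hsum).symm)
  rw [hQeq]
  have hcoeff := coeff_Q0 n t' d hd hsum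
    ⟨(∑ j, d j) - 1, by
      have h1 := Finset.single_le_sum (f := d) (fun j _ => Nat.zero_le _)
        (Finset.mem_univ ⟨0, by omega⟩)
      have h2 := hd ⟨0, by omega⟩
      omega⟩ rfl
  simpa using hcoeff
end

section
/- Let n ≥ 1 and let d_1,...,d_t be positive integers with d_1+...+d_t ≤ n such that exactly one of d_1,...,d_t is odd. Then the symmetric polynomial sum over ordered tuples of distinct indices i_1,...,i_t of x_{i_1}^{d_1}···x_{i_t}^{d_t} is a real linear combination of products p_{m_1}···p_{m_ℓ} of power sums with m_1 + ... + m_ℓ = d_1 + ... + d_t, m_j ∈ {1,...,n}, and exactly one of the m_j odd. -/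
open MvPolynomial Finset

noncomputable def SSaux (n t : ℕ) (d : Fin t → ℕ) : MvPolynomial (Fin n) ℝ :=
  ∑ f ∈ Finset.univ.filter (fun f : Fin t → Fin n => Function.Injective f),
    ∏ j, (X (f j) : MvPolynomial (Fin n) ℝ) ^ d j

theorem SSaux_succ (n t : ℕ) (d : Fin (t+1) → ℕ) :
    SSaux n (t+1) d = (∑ i : Fin n, (X i : MvPolynomial (Fin n) ℝ) ^ d 0) * SSaux n t (d ∘ Fin.succ)
      - ∑ k : Fin t, SSaux n t (Function.update (d ∘ Fin.succ) k (d (Fin.succ k) + d 0)) := by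
  classical
  have key : ∀ (g : Fin t → Fin n), Function.Injective g → ∀ k : Fin t,
      (X (g k) : MvPolynomial (Fin n) ℝ) ^ d 0 * ∏ j, (X (g j) : MvPolynomial (Fin n) ℝ) ^ (d ∘ Fin.succ) j
      = ∏ j, (X (g j) : MvPolynomial (Fin n) ℝ) ^ (Function.update (d ∘ Fin.succ) k (d (Fin.succ k) + d 0)) j := by
    intro g hg k
    have h1 : (fun j => (X (g j) : MvPolynomial (Fin n) ℝ) ^ (Function.update (d ∘ Fin.succ) k (d (Fin.succ k) + d 0)) j)
        = Function.update (fun j => (X (g j) : MvPolynomial (Fin n) ℝ) ^ (d ∘ Fin.succ) j) k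
            ((X (g k) : MvPolynomial (Fin n) ℝ) ^ (d (Fin.succ k) + d 0)) := by
      funext j
      rcases eq_or_ne j k with rfl | hjk
      · simp
      · simp [Function.update_of_ne hjk]
    rw [h1, Finset.prod_update_of_mem (Finset.mem_univ k),
      ← Finset.mul_prod_erase Finset.univ _ (Finset.mem_univ k), Finset.erase_eq]
    simp only [Function.comp_apply, pow_add]
    ring
  -- expand sum over Fin (t+1) → Fin n via cons
  have hsplit : SSaux n (t+1) d
      = ∑ g ∈ Finset.univ.filter (fun g : Fin t → Fin n => Function.Injective g),
          ((∑ i : Fin n, (X i : MvPolynomial (Fin n) ℝ) ^ d 0)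
            - ∑ k : Fin t, (X (g k) : MvPolynomial (Fin n) ℝ) ^ d 0)
            * ∏ j : Fin t, (X (g j) : MvPolynomial (Fin n) ℝ) ^ d (Fin.succ j) := by
    rw [SSaux, Finset.sum_filter]
    rw [← Equiv.sum_comp (Fin.consEquiv (fun _ => Fin n))
      (fun f => if Function.Injective f then ∏ j, (X (f j) : MvPolynomial (Fin n) ℝ) ^ d j else 0)]
    rw [Fintype.sum_prod_type, Finset.sum_comm]
    rw [Finset.sum_filter]
    refine Finset.sum_congr rfl fun g _ => ?_
    by_cases hg : Function.Injective g
    · have hrange : ∀ i : Fin n,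
          (Function.Injective (Fin.cons i g : Fin (t+1) → Fin n)) ↔ i ∉ Set.range g := by
        intro i
        rw [Fin.cons_injective_iff]
        simp [hg]
      have hprod : ∀ i : Fin n, ∏ j : Fin (t+1),
          (X ((Fin.consEquiv (fun _ => Fin n)) (i, g) j) : MvPolynomial (Fin n) ℝ) ^ d j
          = (X i : MvPolynomial (Fin n) ℝ) ^ d 0 * ∏ j : Fin t, (X (g j) : MvPolynomial (Fin n) ℝ) ^ d (Fin.succ j) := by
        intro i
        rw [Fin.prod_univ_succ]
        simp [Fin.consEquiv]
      calc ∑ i : Fin n, (if Function.Injective ((Fin.consEquiv (fun _ => Fin n)) (i, g)) then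
              ∏ j, (X ((Fin.consEquiv (fun _ => Fin n)) (i, g) j) : MvPolynomial (Fin n) ℝ) ^ d j else 0)
          = ∑ i : Fin n, (if i ∉ Set.range g then (X i : MvPolynomial (Fin n) ℝ) ^ d 0 else 0)
              * ∏ j : Fin t, (X (g j) : MvPolynomial (Fin n) ℝ) ^ d (Fin.succ j) := by
            refine Finset.sum_congr rfl fun i _ => ?_
            have : Function.Injective ((Fin.consEquiv (fun _ => Fin n)) (i, g)) ↔ i ∉ Set.range g := hrange i
            rw [ite_congr rfl (fun h => hprod i) (fun _ => rfl)]
            by_cases hi : i ∉ Set.range g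
            · rw [if_pos (by simpa [Fin.consEquiv] using (hrange i).mpr hi), if_pos hi]
            · rw [if_neg (by simpa [Fin.consEquiv] using fun hinj => hi ((hrange i).mp hinj)), if_neg hi, zero_mul]
        _ = (∑ i : Fin n, (if i ∉ Set.range g then (X i : MvPolynomial (Fin n) ℝ) ^ d 0 else 0))
              * ∏ j : Fin t, (X (g j) : MvPolynomial (Fin n) ℝ) ^ d (Fin.succ j) := by
            rw [Finset.sum_mul]
        _ = if Function.Injective g then ((∑ i : Fin n, (X i : MvPolynomial (Fin n) ℝ) ^ d 0)
              - ∑ k : Fin t, (X (g k) : MvPolynomial (Fin n) ℝ) ^ d 0)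
              * ∏ j : Fin t, (X (g j) : MvPolynomial (Fin n) ℝ) ^ d (Fin.succ j) else 0 := by
            rw [if_pos hg]
            congr 1
            have hstep : ∀ i : Fin n, (if i ∉ Set.range g then (X i : MvPolynomial (Fin n) ℝ) ^ d 0 else 0)
                = (X i : MvPolynomial (Fin n) ℝ) ^ d 0 - (if i ∈ Set.range g then (X i : MvPolynomial (Fin n) ℝ) ^ d 0 else 0) := by
              intro i
              by_cases hi : i ∈ Set.range g <;> simp [hi]
            rw [Finset.sum_congr rfl (fun i _ => hstep i), Finset.sum_sub_distrib]
            congr 1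
            have himg : Finset.univ.filter (fun i : Fin n => i ∈ Set.range g) = Finset.univ.image g := by
              ext i; simp [Set.mem_range]
            rw [← Finset.sum_filter, himg, Finset.sum_image (fun a _ b _ h => hg h)]
    · rw [if_neg hg]
      refine Finset.sum_eq_zero fun i _ => ?_
      rw [if_neg]
      intro hinj
      exact hg (by simpa [Fin.consEquiv] using (Fin.cons_injective_iff.mp (by simpa [Fin.consEquiv] using hinj)).2)
  rw [hsplit]
  have expand : ∀ g : Fin t → Fin n,
      ((∑ i : Fin n, (X i : MvPolynomial (Fin n) ℝ) ^ d 0)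
        - ∑ k : Fin t, (X (g k) : MvPolynomial (Fin n) ℝ) ^ d 0)
        * ∏ j : Fin t, (X (g j) : MvPolynomial (Fin n) ℝ) ^ d (Fin.succ j)
      = (∑ i : Fin n, (X i : MvPolynomial (Fin n) ℝ) ^ d 0)
          * ∏ j : Fin t, (X (g j) : MvPolynomial (Fin n) ℝ) ^ d (Fin.succ j)
        - ∑ k : Fin t, (X (g k) : MvPolynomial (Fin n) ℝ) ^ d 0
          * ∏ j : Fin t, (X (g j) : MvPolynomial (Fin n) ℝ) ^ d (Fin.succ j) := by
    intro g
    rw [sub_mul]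
    congr 1
    exact Finset.sum_mul _ _ _
  rw [Finset.sum_congr rfl (fun g _ => expand g), Finset.sum_sub_distrib]
  congr 1
  · rw [SSaux, Finset.mul_sum]
    rfl
  · rw [Finset.sum_comm]
    refine Finset.sum_congr rfl fun k _ => ?_
    rw [SSaux]
    refine Finset.sum_congr rfl fun g hg => ?_
    exact key g (Finset.mem_filter.mp hg).2 k

def GenAux (n s c : ℕ) : Set (MvPolynomial (Fin n) ℝ) :=
  {Q | ∃ (L : ℕ) (m : Fin L → ℕ),
        (∀ j, 1 ≤ m j ∧ m j ≤ n) ∧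
        (∑ j, m j = s) ∧
        ((Finset.univ.filter fun j => Odd (m j)).card = c) ∧
        Q = ∏ j, ∑ i : Fin n, (X i : MvPolynomial (Fin n) ℝ) ^ m j}

theorem mul_power_mem (n s c a : ℕ) (ha1 : 1 ≤ a) (han : a ≤ n)
    {x : MvPolynomial (Fin n) ℝ} (hx : x ∈ Submodule.span ℝ (GenAux n s c)) :
    (∑ i : Fin n, (X i : MvPolynomial (Fin n) ℝ) ^ a) * x
      ∈ Submodule.span ℝ (GenAux n (a + s) ((if Odd a then 1 else 0) + c)) := by
  classical
  induction hx using Submodule.span_induction with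
  | mem Q hQ =>
    obtain ⟨L, m, hm, hsum, hcard, rfl⟩ := hQ
    apply Submodule.subset_span
    refine ⟨L + 1, Fin.cons a m, ?_, ?_, ?_, ?_⟩
    · intro j
      refine Fin.cases ?_ ?_ j
      · simpa using ⟨ha1, han⟩
      · intro k; simpa using hm k
    · rw [Fin.sum_univ_succ]; simp [hsum]
    · rw [Finset.card_filter, Fin.sum_univ_succ]
      rw [Finset.card_filter] at hcard
      simp only [Fin.cons_zero, Fin.cons_succ]
      omega
    · rw [Fin.prod_univ_succ]
      simp
  | zero => rw [mul_zero]; exact Submodule.zero_mem _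
  | add y z _ _ hy hz => rw [mul_add]; exact Submodule.add_mem _ hy hz
  | smul r y _ hy => rw [mul_smul_comm]; exact Submodule.smul_mem _ r hy

theorem SSaux_mem (n : ℕ) : ∀ (t : ℕ) (d : Fin t → ℕ), (∀ j, 1 ≤ d j) → (∑ j, d j ≤ n) →
    ((Finset.univ.filter fun j => Odd (d j)).card ≤ 1) →
    SSaux n t d ∈ Submodule.span ℝ
      (GenAux n (∑ j, d j) ((Finset.univ.filter fun j => Odd (d j)).card)) := by
  intro t
  induction t with
  | zero =>
    intro d _ _ _
    have h1 : SSaux n 0 d = 1 := by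
      rw [SSaux]
      have : (Finset.univ.filter (fun f : Fin 0 → Fin n => Function.Injective f))
          = Finset.univ := by
        apply Finset.filter_true_of_mem
        intro f _ a
        exact a.elim0
      rw [this]
      simp
    rw [h1]
    apply Submodule.subset_span
    refine ⟨0, fun j => j.elim0, fun j => j.elim0, by simp, by simp, by simp⟩
  | succ t ih =>
    intro d hd hsum hc
    set a := d 0 with ha
    set d' := d ∘ Fin.succ with hd'
    have hsum' : ∑ j : Fin (t+1), d j = a + ∑ j : Fin t, d' j := by
      rw [Fin.sum_univ_succ]; rfl
    have hcard' : (Finset.univ.filter fun j : Fin (t+1) => Odd (d j)).card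
        = (if Odd a then 1 else 0) + (Finset.univ.filter fun j : Fin t => Odd (d' j)).card := by
      rw [Finset.card_filter, Finset.card_filter, Fin.sum_univ_succ]; rfl
    set c' := (Finset.univ.filter fun j : Fin t => Odd (d' j)).card with hcdef
    rw [SSaux_succ]
    apply Submodule.sub_mem
    · -- the product term
      have h1 := ih d' (fun j => hd j.succ) (by omega) (by omega)
      have h2 := mul_power_mem n (∑ j, d' j) c' a (hd 0) (by omega) h1
      rw [hsum', hcard']
      exact h2
    · -- the merged terms
      apply Submodule.sum_mem
      intro k _
      set e := Function.update d' k (d (Fin.succ k) + a) with hedef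
      have hdk : d' k = d (Fin.succ k) := rfl
      have he1 : ∀ j, 1 ≤ e j := by
        intro j
        rcases eq_or_ne j k with rfl | hjk
        · have h0 := hd 0
          simp [hedef]
          omega
        · rw [hedef, Function.update_of_ne hjk]; exact hd j.succ
      have hesum : ∑ j, e j = a + ∑ j, d' j := by
        rw [hedef, Finset.sum_update_of_mem (Finset.mem_univ k)]
        have := Finset.add_sum_erase Finset.univ d' (Finset.mem_univ k)
        rw [Finset.erase_eq] at this
        omega
      have hecard : (Finset.univ.filter fun j => Odd (e j)).card
          = (if Odd a then 1 else 0) + c' := by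
        have hupd : (fun j => if Odd (e j) then 1 else 0)
            = Function.update (fun j => if Odd (d' j) then (1:ℕ) else 0) k
                (if Odd (d' k + a) then 1 else 0) := by
          funext j
          rcases eq_or_ne j k with rfl | hjk
          · simp [hedef, hdk]
          · rw [Function.update_of_ne hjk, hedef, Function.update_of_ne hjk]
        have e1 : (Finset.univ.filter fun j => Odd (e j)).card
            = (if Odd (d' k + a) then 1 else 0)
              + ∑ j ∈ Finset.univ \ {k}, (if Odd (d' j) then 1 else 0) := by
          rw [Finset.card_filter, Finset.sum_congr rfl (fun j _ => congrFun hupd j),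
            Finset.sum_update_of_mem (Finset.mem_univ k)]
        have e2 : c' = (if Odd (d' k) then 1 else 0)
              + ∑ j ∈ Finset.univ \ {k}, (if Odd (d' j) then 1 else 0) := by
          rw [hcdef, Finset.card_filter,
            ← Finset.add_sum_erase Finset.univ (fun j => if Odd (d' j) then (1:ℕ) else 0)
              (Finset.mem_univ k), Finset.erase_eq]
        have hpar : Odd (d' k + a) ↔ (Odd (d' k) ↔ Even a) := Nat.odd_add
        have hc2 : (if Odd a then 1 else 0) + c' ≤ 1 := by
          rw [← hcard']; exact hc
        rcases Nat.even_or_odd a with hae | hao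
        · have : ¬ Odd a := by simp [Nat.not_odd_iff_even, hae]
          have hp : Odd (d' k + a) ↔ Odd (d' k) := by
            rw [hpar]; constructor
            · intro h; exact h.mpr hae
            · intro h; exact ⟨fun _ => hae, fun _ => h⟩
          rw [e1, if_congr hp rfl rfl, ← e2]
          simp [this]
        · have hA : Odd a := hao
          have hnA : ¬ Even a := Nat.not_even_iff_odd.mpr hao
          have hdk' : ¬ Odd (d' k) := by
            intro hodd
            rw [e2] at hc2
            simp [hA, hodd] at hc2
          have hp : Odd (d' k + a) := by
            rw [hpar]
            constructor
            · intro h; exact absurd h hdk'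
            · intro h; exact absurd h hnA
          rw [e1, if_pos hp, e2, if_neg hdk']
          simp [hA]
      have := ih e he1 (by omega) (by omega)
      rw [hesum, hecard] at this
      rw [hsum', hcard']
      exact this

open MvPolynomial in
/-- If exactly one of `d₁,…,d_t` is odd, then `∑_{i₁,…,i_t distinct} x_{i₁}^{d₁}⋯x_{i_t}^{d_t}`
is a real linear combination of products `p_{m₁}⋯p_{m_ℓ}` of power sums with
`m₁ + ⋯ + m_ℓ = d₁ + ⋯ + d_t`, each `m_j ∈ {1,…,n}`, and exactly one `m_j` odd. -/
theorem symmetric_poly_in_span_power_sums (n t : ℕ) (hn : 1 ≤ n) (ht : 1 ≤ t)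
    (d : Fin t → ℕ) (hd : ∀ j, 1 ≤ d j) (hsum : ∑ j, d j ≤ n)
    (hodd : ∃! j, Odd (d j)) :
    (∑ e : Fin t ↪ Fin n, ∏ j, (X (e j) : MvPolynomial (Fin n) ℝ) ^ d j)
      ∈ Submodule.span ℝ {Q : MvPolynomial (Fin n) ℝ |
          ∃ (L : ℕ) (m : Fin L → ℕ),
            (∀ j, 1 ≤ m j ∧ m j ≤ n) ∧
            (∑ j, m j = ∑ j, d j) ∧
            (∃! j, Odd (m j)) ∧
            Q = ∏ j, ∑ i : Fin n, (X i : MvPolynomial (Fin n) ℝ) ^ m j} := by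
  classical
  -- the embedding sum equals SSaux
  have hSS : (∑ e : Fin t ↪ Fin n, ∏ j, (X (e j) : MvPolynomial (Fin n) ℝ) ^ d j)
      = SSaux n t d := by
    rw [SSaux]
    refine Finset.sum_bij' (fun (e : Fin t ↪ Fin n) _ => (e : Fin t → Fin n))
      (fun f hf => ⟨f, (Finset.mem_filter.mp hf).2⟩) ?_ ?_ ?_ ?_ ?_
    · intro e _
      exact Finset.mem_filter.mpr ⟨Finset.mem_univ _, e.injective⟩
    · intro f _
      exact Finset.mem_univ _
    · intro e _
      rfl
    · intro f _
      rfl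
    · intro e _
      rfl
  rw [hSS]
  -- the filter card is 1
  have hcard : (Finset.univ.filter fun j => Odd (d j)).card = 1 := by
    obtain ⟨j0, hj0, hu⟩ := hodd
    rw [Finset.card_eq_one]
    refine ⟨j0, ?_⟩
    ext x
    simp only [Finset.mem_filter, Finset.mem_univ, true_and, Finset.mem_singleton]
    exact ⟨fun h => hu x h, fun h => h ▸ hj0⟩
  have hmem := SSaux_mem n t d hd hsum (by rw [hcard])
  rw [hcard] at hmem
  refine Submodule.span_mono ?_ hmem
  rintro Q ⟨L, m, hm, hs, hc, rfl⟩
  refine ⟨L, m, hm, hs, ?_, rfl⟩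
  obtain ⟨j0, hj0⟩ := Finset.card_eq_one.mp hc
  refine ⟨j0, ?_, ?_⟩
  · have : j0 ∈ Finset.univ.filter fun j => Odd (m j) := hj0 ▸ Finset.mem_singleton_self j0
    exact (Finset.mem_filter.mp this).2
  · intro b hb
    have : b ∈ Finset.univ.filter fun j => Odd (m j) := Finset.mem_filter.mpr ⟨Finset.mem_univ b, hb⟩
    rw [hj0] at this
    exact Finset.mem_singleton.mp this
end
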